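/- arXiv:2003.02187 — 9 statements merged into one kernel-verified Lean document; each statement's English description precedes it below -/
import Mathlib

section
/- Let τ ≥ 2 and a₁,…,a_τ be positive integers each at most τ. Let F be the τ × 2τ integer matrix (G | −I) where G is lower-triangular with G_{k,ℓ} = a_ℓ for ℓ ≤ k and 0 otherwise, and I is the τ × τ identity. Then every element (g,h) of the Graver basis of F satisfies ‖(g,h)‖_∞ ≤ C·τ⁴ for some absolute constant C (e.g. C = 3 suffices). -/
open Finset

/-- `g` is conformal to `h`: same orthant and componentwise smaller. -/
def ConformalTo {n : Type*} (g h : n → ℤ) : Prop :=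
  ∀ i, 0 ≤ g i * h i ∧ |g i| ≤ |h i|

/-- `g` is an element of the Graver basis of `A`: a ⊑-minimal nonzero integer
kernel element. -/
def InGraver {m n : Type*} [Fintype m] [Fintype n] (A : Matrix m n ℤ) (g : n → ℤ) : Prop :=
  g ≠ 0 ∧ A.mulVec g = 0 ∧
    ∀ g' : n → ℤ, g' ≠ 0 → A.mulVec g' = 0 → ConformalTo g' g → g' = g


private lemma sum_single (b : ℕ → ℤ) (c₀ : ℕ) (v : ℤ) (n : ℕ) :
    ∑ i ∈ Finset.range n, b i * (if i = c₀ then v else 0)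
      = if c₀ < n then b c₀ * v else 0 := by
  simp [mul_ite, Finset.sum_ite_eq', Finset.mem_range]

set_option maxHeartbeats 2000000 in
private lemma core (τ : ℕ) (hτ : 2 ≤ τ) (b y : ℕ → ℤ)
    (hb1 : ∀ i, 1 ≤ b i) (hb2 : ∀ i, b i ≤ (τ : ℤ))
    (hy0 : ∀ i, τ ≤ i → y i = 0)
    (m : ℕ) (hm1 : 1 ≤ m) (hmτ : m ≤ τ)
    (hbig : (τ : ℤ) ^ 4 + 1 ≤ ∑ i ∈ Finset.range m, b i * y i) :
    ∃ y' : ℕ → ℤ,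
      (∀ i, 0 ≤ y' i * y i ∧ |y' i| ≤ |y i|) ∧
      (∀ n, 0 ≤ (∑ i ∈ Finset.range n, b i * y' i) * (∑ i ∈ Finset.range n, b i * y i) ∧
        |∑ i ∈ Finset.range n, b i * y' i| ≤ |∑ i ∈ Finset.range n, b i * y i|) ∧
      (∃ i, i < τ ∧ y' i ≠ 0) ∧
      (∑ i ∈ Finset.range m, b i * y' i ≠ ∑ i ∈ Finset.range m, b i * y i) := by
  set P : ℕ → ℤ := fun n => ∑ i ∈ Finset.range n, b i * y i with hPdef
  have hτZ : (2 : ℤ) ≤ (τ : ℤ) := by exact_mod_cast hτ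
  have hτ2 : (τ : ℤ) ≤ (τ : ℤ) ^ 2 := by nlinarith
  have hτ23 : (τ : ℤ) ^ 2 ≤ (τ : ℤ) ^ 3 := by nlinarith
  have hτ34 : (τ : ℤ) ^ 3 ≤ (τ : ℤ) ^ 4 := by nlinarith
  have hτ24 : (τ : ℤ) ^ 2 ≤ (τ : ℤ) ^ 4 := le_trans hτ23 hτ34
  have hτ13 : (τ : ℤ) ≤ (τ : ℤ) ^ 3 := le_trans hτ2 hτ23
  have hτ4 : (τ : ℤ) ≤ (τ : ℤ) ^ 4 := le_trans hτ2 hτ24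
  have hPstab : ∀ n, τ ≤ n → P n = P τ := by
    intro n hn
    refine (Finset.sum_subset (Finset.range_subset_range.mpr hn) ?_).symm
    intro i _ hi
    rw [hy0 i (by simpa using hi), mul_zero]
  have hP0 : P 0 = 0 := by simp [hPdef]
  have hPm : (τ : ℤ) ^ 4 + 1 ≤ P m := hbig
  by_cases hA : ∀ j, m ≤ j → j ≤ τ → (τ : ℤ) ≤ P j
  · -- Case A
    have hTne : (Finset.Icc m τ).Nonempty := ⟨m, by simp [Finset.mem_Icc]; omega⟩
    set μ : ℤ := (Finset.Icc m τ).inf' hTne P with hμdef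
    have hμle : ∀ j, m ≤ j → j ≤ τ → μ ≤ P j := by
      intro j h1 h2; exact Finset.inf'_le P (by simp [Finset.mem_Icc]; omega)
    have hτμ : (τ : ℤ) ≤ μ := by
      apply Finset.le_inf'
      intro j hj; simp [Finset.mem_Icc] at hj; exact hA j hj.1 hj.2
    set C : Finset ℕ := (Finset.Icc 1 m).filter (fun n => P (n - 1) < μ) with hCdef
    have hCne : C.Nonempty := by
      refine ⟨1, ?_⟩
      simp only [hCdef, Finset.mem_filter, Finset.mem_Icc]
      refine ⟨⟨le_refl 1, hm1⟩, ?_⟩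
      simpa [hP0] using lt_of_lt_of_le (by linarith : (0:ℤ) < τ) hτμ
    set c : ℕ := C.max' hCne with hcdef
    have hcC : c ∈ C := Finset.max'_mem _ _
    have hc1 : 1 ≤ c := by
      have := hcC; simp only [hCdef, Finset.mem_filter, Finset.mem_Icc] at this; omega
    have hcm : c ≤ m := by
      have := hcC; simp only [hCdef, Finset.mem_filter, Finset.mem_Icc] at this; omega
    have hPc1 : P (c - 1) < μ := by
      have := hcC; simp only [hCdef, Finset.mem_filter, Finset.mem_Icc] at this; exact this.2
    have hge : ∀ j, c ≤ j → j ≤ τ → μ ≤ P j := by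
      intro j h1 h2
      rcases le_or_gt m j with h | h
      · exact hμle j h h2
      · by_contra hlt
        push_neg at hlt
        have hjC : j + 1 ∈ C := by
          simp only [hCdef, Finset.mem_filter, Finset.mem_Icc]
          exact ⟨⟨by omega, by omega⟩, by simpa using hlt⟩
        have := Finset.le_max' C (j + 1) hjC
        omega
    set c₀ : ℕ := c - 1 with hc₀def
    have hcc : c = c₀ + 1 := by omega
    have hstep : P c = P c₀ + b c₀ * y c₀ := by
      rw [hcc]; exact Finset.sum_range_succ _ _
    have hPcμ : μ ≤ P c := hge c le_rfl (le_trans hcm hmτ)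
    have hby : 0 < b c₀ * y c₀ := by
      have : P c₀ < μ := hPc1
      linarith
    have hyc : 1 ≤ y c₀ := by
      rcases le_or_gt (y c₀) 0 with h | h
      · exfalso
        have : b c₀ * y c₀ ≤ 0 := mul_nonpos_of_nonneg_of_nonpos (by linarith [hb1 c₀]) h
        linarith
      · have := Int.lt_iff_add_one_le.mp h
        linarith
    have hc₀τ : c₀ < τ := by
      by_contra h
      push_neg at h
      rw [hy0 c₀ h] at hyc; omega
    set y' : ℕ → ℤ := fun i => if i = c₀ then 1 else 0 with hy'def
    have hv1 : y' c₀ = 1 := by simp [hy'def]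
    have hv0 : ∀ i, i ≠ c₀ → y' i = 0 := fun i h => by simp [hy'def, h]
    refine ⟨y', ?_, ?_, ⟨c₀, hc₀τ, by rw [hv1]; norm_num⟩, ?_⟩
    · intro i
      by_cases h : i = c₀
      · rw [h, hv1, one_mul, abs_one]
        exact ⟨by linarith, le_trans hyc (le_abs_self _)⟩
      · rw [hv0 i h]
        simp [abs_nonneg]
    · intro n
      simp only [hy'def]
      rw [sum_single]
      by_cases hn : c₀ < n
      · rw [if_pos hn, mul_one]
        have hPn : μ ≤ P n := by
          rcases le_or_gt n τ with h | h
          · exact hge n (by omega) h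
          · rw [hPstab n (le_of_lt h)]; exact hge τ (by omega) le_rfl
        have h1 := hb1 c₀
        have h2 := hb2 c₀
        constructor
        · apply mul_nonneg <;> linarith
        · rw [abs_of_nonneg (by linarith : (0:ℤ) ≤ b c₀),
            abs_of_nonneg (by linarith : (0:ℤ) ≤ P n)]
          linarith
      · rw [if_neg hn]
        simp [abs_nonneg]
    · simp only [hy'def]
      rw [sum_single, if_pos (by omega : c₀ < m), mul_one]
      intro h
      have := hb2 c₀
      rw [h] at this
      linarith
  · -- Case B
    push_neg at hA
    obtain ⟨j₀, hj₀1, hj₀2, hj₀3⟩ := hA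
    set Q : Finset ℕ := (Finset.Icc m τ).filter (fun j => P j < (τ : ℤ) ^ 2) with hQdef
    have hQne : Q.Nonempty := by
      refine ⟨j₀, ?_⟩
      simp only [hQdef, Finset.mem_filter, Finset.mem_Icc]
      exact ⟨⟨hj₀1, hj₀2⟩, by linarith⟩
    set q : ℕ := Q.min' hQne with hqdef
    have hqQ : q ∈ Q := Finset.min'_mem _ _
    have hqm : m ≤ q := by
      have := hqQ; simp only [hQdef, Finset.mem_filter, Finset.mem_Icc] at this; omega
    have hqτ : q ≤ τ := by
      have := hqQ; simp only [hQdef, Finset.mem_filter, Finset.mem_Icc] at this; omega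
    have hPq : P q < (τ : ℤ) ^ 2 := by
      have := hqQ; simp only [hQdef, Finset.mem_filter, Finset.mem_Icc] at this; exact this.2
    have hmq : m < q := by
      rcases eq_or_lt_of_le hqm with h | h
      · exfalso; rw [← h] at hPq; linarith
      · exact h
    have hqlow : ∀ j, m ≤ j → j < q → (τ : ℤ) ^ 2 ≤ P j := by
      intro j h1 h2
      by_contra h
      push_neg at h
      have : j ∈ Q := by
        simp only [hQdef, Finset.mem_filter, Finset.mem_Icc]
        exact ⟨⟨h1, by omega⟩, h⟩
      have := Finset.min'_le Q j this
      omega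
    set Ps : Finset ℕ := (Finset.range m).filter (fun j => P j < (τ : ℤ) ^ 2) with hPsdef
    have hPsne : Ps.Nonempty := by
      refine ⟨0, ?_⟩
      simp only [hPsdef, Finset.mem_filter, Finset.mem_range]
      exact ⟨by omega, by rw [hP0]; nlinarith⟩
    set p : ℕ := Ps.max' hPsne with hpdef
    have hpPs : p ∈ Ps := Finset.max'_mem _ _
    have hpm : p < m := by
      have := hpPs; simp only [hPsdef, Finset.mem_filter, Finset.mem_range] at this; omega
    have hPp : P p < (τ : ℤ) ^ 2 := by
      have := hpPs; simp only [hPsdef, Finset.mem_filter, Finset.mem_range] at this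
      exact this.2
    have hplow : ∀ j, p < j → j ≤ m → (τ : ℤ) ^ 2 ≤ P j := by
      intro j h1 h2
      rcases eq_or_lt_of_le h2 with h | h
      · rw [h]; linarith
      · by_contra hlt
        push_neg at hlt
        have : j ∈ Ps := by
          simp only [hPsdef, Finset.mem_filter, Finset.mem_range]
          exact ⟨h, hlt⟩
        have := Finset.le_max' Ps j this
        omega
    have hmid : ∀ j, p < j → j < q → (τ : ℤ) ^ 2 ≤ P j := by
      intro j h1 h2
      rcases le_or_gt j m with h | h
      · exact hplow j h1 h
      · exact hqlow j (le_of_lt h) h2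
    set D : ℤ := (τ : ℤ) ^ 3 - τ + 1 with hDdef
    have hτ3 : (τ : ℤ) ^ 2 ≤ (τ : ℤ) ^ 3 := by nlinarith
    -- big ascending step
    have hc : ∃ i, p ≤ i ∧ i < m ∧ D ≤ b i * y i := by
      by_contra h
      push_neg at h
      have hsum : ∑ i ∈ Finset.Ico p m, b i * y i ≤ ((m - p : ℕ) : ℤ) * (D - 1) := by
        have := Finset.sum_le_card_nsmul (Finset.Ico p m) (fun i => b i * y i) (D - 1)
          (fun i hi => by
            simp only [Finset.mem_Ico] at hi
            have h2 := Int.lt_iff_add_one_le.mp (h i hi.1 hi.2)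
            show b i * y i ≤ D - 1
            linarith)
        simpa [Nat.card_Ico, nsmul_eq_mul] using this
      have hsub : ∑ i ∈ Finset.Ico p m, b i * y i = P m - P p :=
        Finset.sum_Ico_eq_sub _ (le_of_lt hpm)
      have hcard : ((m - p : ℕ) : ℤ) ≤ (τ : ℤ) := by
        have : m - p ≤ τ := by omega
        exact_mod_cast this
      have hD1 : (0 : ℤ) ≤ D - 1 := by rw [hDdef]; linarith
      have hfin : P m - P p ≤ (τ : ℤ) * (D - 1) := by
        calc P m - P p ≤ ((m - p : ℕ) : ℤ) * (D - 1) := by rw [← hsub]; exact hsum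
          _ ≤ (τ : ℤ) * (D - 1) := mul_le_mul_of_nonneg_right hcard hD1
      rw [hDdef] at hfin
      have e : (τ : ℤ) * ((τ : ℤ) ^ 3 - τ + 1 - 1) = (τ : ℤ) ^ 4 - (τ : ℤ) ^ 2 := by ring
      linarith
    obtain ⟨c₀, hpc, hcm, hcD⟩ := hc
    have hD0 : (0 : ℤ) < D := by rw [hDdef]; linarith
    have hyc0 : 0 < y c₀ := by
      rcases le_or_gt (y c₀) 0 with h | h
      · exfalso
        have : b c₀ * y c₀ ≤ 0 := mul_nonpos_of_nonneg_of_nonpos (by linarith [hb1 c₀]) h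
        linarith
      · exact h
    have hyc : (τ : ℤ) ≤ y c₀ := by
      by_contra h
      push_neg at h
      have h1 : b c₀ * y c₀ ≤ (τ : ℤ) * y c₀ :=
        mul_le_mul_of_nonneg_right (hb2 c₀) (le_of_lt hyc0)
      have h2 : (τ : ℤ) * y c₀ ≤ (τ : ℤ) * (τ - 1) :=
        mul_le_mul_of_nonneg_left (by have := Int.lt_iff_add_one_le.mp h; linarith)
          (by linarith)
      rw [hDdef] at hcD
      have e : (τ : ℤ) * ((τ : ℤ) - 1) = (τ : ℤ) ^ 2 - τ := by ring
      linarith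
    -- big descending step
    have hf : ∃ i, m ≤ i ∧ i < q ∧ b i * y i ≤ -D := by
      by_contra h
      push_neg at h
      have hsum : ((q - m : ℕ) : ℤ) * (-D + 1) ≤ ∑ i ∈ Finset.Ico m q, b i * y i := by
        have := Finset.card_nsmul_le_sum (Finset.Ico m q) (fun i => b i * y i) (-D + 1)
          (fun i hi => by
            simp only [Finset.mem_Ico] at hi
            have h2 := Int.lt_iff_add_one_le.mp (h i hi.1 hi.2)
            show -D + 1 ≤ b i * y i
            linarith)
        rw [Nat.card_Ico, nsmul_eq_mul] at this
        exact this
      have hsub : ∑ i ∈ Finset.Ico m q, b i * y i = P q - P m :=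
        Finset.sum_Ico_eq_sub _ (le_of_lt hmq)
      have hcard : ((q - m : ℕ) : ℤ) ≤ (τ : ℤ) := by
        have : q - m ≤ τ := by omega
        exact_mod_cast this
      have hD1 : (-D + 1 : ℤ) ≤ 0 := by rw [hDdef]; linarith
      have hfin : (τ : ℤ) * (-D + 1) ≤ P q - P m := by
        calc (τ : ℤ) * (-D + 1) ≤ ((q - m : ℕ) : ℤ) * (-D + 1) :=
              mul_le_mul_of_nonpos_right hcard hD1
          _ ≤ P q - P m := by rw [← hsub]; exact hsum
      rw [hDdef] at hfin
      have e : (τ : ℤ) * (-((τ : ℤ) ^ 3 - τ + 1) + 1) = -((τ : ℤ) ^ 4) + (τ : ℤ) ^ 2 := by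
        ring
      linarith
    obtain ⟨f₀, hmf, hfq, hfD⟩ := hf
    have hyf0 : y f₀ < 0 := by
      rcases le_or_gt 0 (y f₀) with h | h
      · exfalso
        have : 0 ≤ b f₀ * y f₀ := mul_nonneg (by linarith [hb1 f₀]) h
        linarith
      · exact h
    have hyf : y f₀ ≤ -(τ : ℤ) := by
      by_contra h
      push_neg at h
      have h1 : (τ : ℤ) * y f₀ ≤ b f₀ * y f₀ :=
        mul_le_mul_of_nonpos_right (hb2 f₀) (le_of_lt hyf0)
      have h2 : (τ : ℤ) * (-(τ : ℤ) + 1) ≤ (τ : ℤ) * y f₀ :=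
        mul_le_mul_of_nonneg_left (by have := Int.lt_iff_add_one_le.mp h; linarith)
          (by linarith)
      rw [hDdef] at hfD
      have e : (τ : ℤ) * (-(τ : ℤ) + 1) = -((τ : ℤ) ^ 2) + τ := by ring
      linarith
    have hcf : c₀ ≠ f₀ := by omega
    have hfc : f₀ ≠ c₀ := Ne.symm hcf
    set A : ℤ := b c₀ * b f₀ with hAdef
    have hA1 : 1 ≤ A := by
      have h1 : (1 : ℤ) * 1 ≤ b c₀ * b f₀ :=
        mul_le_mul (hb1 c₀) (hb1 f₀) zero_le_one (le_trans zero_le_one (hb1 c₀))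
      rw [hAdef]; linarith
    have hAτ : A ≤ (τ : ℤ) ^ 2 := by
      have h1 : b c₀ * b f₀ ≤ (τ : ℤ) * (τ : ℤ) :=
        mul_le_mul (hb2 c₀) (hb2 f₀) (le_trans zero_le_one (hb1 f₀)) (Int.natCast_nonneg τ)
      have e : (τ : ℤ) * (τ : ℤ) = (τ : ℤ) ^ 2 := by ring
      rw [hAdef]; linarith
    set y' : ℕ → ℤ := fun i => if i = c₀ then b f₀ else if i = f₀ then -(b c₀) else 0
      with hy'def
    have hv1 : y' c₀ = b f₀ := by simp [hy'def]
    have hv2 : y' f₀ = -(b c₀) := by simp [hy'def, hfc]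
    have hv0 : ∀ i, i ≠ c₀ → i ≠ f₀ → y' i = 0 := fun i h1 h2 => by simp [hy'def, h1, h2]
    have hP' : ∀ n, ∑ i ∈ Finset.range n, b i * y' i
        = (if c₀ < n then A else 0) + (if f₀ < n then -A else 0) := by
      intro n
      have heq : ∀ i, b i * y' i
          = b i * (if i = c₀ then b f₀ else 0) + b i * (if i = f₀ then -(b c₀) else 0) := by
        intro i
        by_cases h1 : i = c₀
        · rw [h1, hv1]
          simp [hcf]
        · by_cases h2 : i = f₀
          · rw [h2, hv2]
            simp [hfc]
          · rw [hv0 i h1 h2]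
            simp [h1, h2]
      rw [Finset.sum_congr rfl (fun i _ => heq i), Finset.sum_add_distrib,
        sum_single, sum_single]
      have e2 : (if f₀ < n then b f₀ * -(b c₀) else 0) = (if f₀ < n then -A else 0) := by
        rw [hAdef]
        by_cases h : f₀ < n
        · rw [if_pos h, if_pos h]
          ring
        · rw [if_neg h, if_neg h]
      rw [e2, hAdef]
    refine ⟨y', ?_, ?_, ⟨c₀, by omega, ?_⟩, ?_⟩
    · intro i
      by_cases h1 : i = c₀
      · rw [h1, hv1]
        constructor
        · apply mul_nonneg (by linarith [hb1 f₀]) (by linarith)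
        · rw [abs_of_nonneg (by linarith [hb1 f₀] : (0:ℤ) ≤ b f₀),
            abs_of_nonneg (by linarith : (0:ℤ) ≤ y c₀)]
          linarith [hb2 f₀]
      · by_cases h2 : i = f₀
        · rw [h2, hv2]
          constructor
          · have h9 : (0:ℤ) ≤ b c₀ * (-(y f₀)) :=
              mul_nonneg (by linarith [hb1 c₀]) (by linarith)
            have e9 : -(b c₀) * y f₀ = b c₀ * (-(y f₀)) := by ring
            rw [e9]
            exact h9
          · rw [abs_of_nonpos (by linarith [hb1 c₀] : -(b c₀) ≤ (0:ℤ)),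
              abs_of_nonpos (by linarith : y f₀ ≤ (0:ℤ))]
            simp only [neg_neg]
            linarith [hb2 c₀]
        · rw [hv0 i h1 h2]
          simp [abs_nonneg]
    · intro n
      rw [hP']
      by_cases h1 : c₀ < n
      · by_cases h2 : f₀ < n
        · rw [if_pos h1, if_pos h2]
          simp [abs_nonneg]
        · rw [if_pos h1, if_neg h2, add_zero]
          have hPn : (τ : ℤ) ^ 2 ≤ P n := hmid n (by omega) (by omega)
          constructor
          · apply mul_nonneg (by linarith) (by linarith)
          · rw [abs_of_nonneg (by linarith : (0:ℤ) ≤ A),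
              abs_of_nonneg (by linarith : (0:ℤ) ≤ P n)]
            linarith
      · have h2 : ¬ f₀ < n := by omega
        rw [if_neg h1, if_neg h2]
        simp [abs_nonneg]
    · rw [hv1]
      intro h
      have := hb1 f₀
      linarith
    · rw [hP', if_pos (by omega : c₀ < m), if_neg (by omega : ¬ f₀ < m), add_zero]
      intro h
      linarith


private lemma inGraver_neg {m n : Type*} [Fintype m] [Fintype n] (A : Matrix m n ℤ)
    (g : n → ℤ) (h : InGraver A g) : InGraver A (-g) := by
  obtain ⟨h0, hker, hmin⟩ := h
  refine ⟨fun hh => h0 (by rw [← neg_neg g, hh, neg_zero]),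
    by rw [Matrix.mulVec_neg, hker, neg_zero], ?_⟩
  intro g' hg'0 hg'k hg'c
  have hconf : ConformalTo (-g') g := by
    intro i
    obtain ⟨h1, h2⟩ := hg'c i
    constructor
    · have e1 : g' i * (-g) i = -(g' i * g i) := by
        simp only [Pi.neg_apply]; ring
      rw [e1] at h1
      have e2 : (-g') i * g i = -(g' i * g i) := by
        simp only [Pi.neg_apply]; ring
      rw [e2]
      exact h1
    · have e3 : |(-g') i| = |g' i| := by simp
      have e4 : |(-g) i| = |g i| := by simp
      rw [e3]
      rw [e4] at h2
      exact h2
  have hthis := hmin (-g') (fun hh => hg'0 (by rw [← neg_neg g', hh, neg_zero]))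
    (by rw [Matrix.mulVec_neg, hg'k, neg_zero]) hconf
  rw [← hthis, neg_neg]

private lemma mulVec_apply (τ : ℕ) (a : Fin τ → ℤ)
    (F : Matrix (Fin τ) (Fin τ ⊕ Fin τ) ℤ)
    (hF₁ : ∀ k ℓ, F k (Sum.inl ℓ) = if ℓ ≤ k then a ℓ else 0)
    (hF₂ : ∀ k ℓ, F k (Sum.inr ℓ) = if ℓ = k then -1 else 0)
    (w : Fin τ ⊕ Fin τ → ℤ) (k : Fin τ) :
    F.mulVec w k =
      (∑ ℓ : Fin τ, (if ℓ ≤ k then a ℓ else 0) * w (Sum.inl ℓ)) - w (Sum.inr k) := by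
  simp only [Matrix.mulVec, dotProduct, Fintype.sum_sum_type, hF₁, hF₂]
  have h2 : ∑ ℓ : Fin τ, (if ℓ = k then (-1 : ℤ) else 0) * w (Sum.inr ℓ)
      = -(w (Sum.inr k)) := by
    rw [Finset.sum_congr rfl (fun ℓ _ => by
      rw [ite_mul, zero_mul, neg_mul, one_mul] :
      ∀ ℓ ∈ Finset.univ, (if ℓ = k then (-1 : ℤ) else 0) * w (Sum.inr ℓ)
        = if ℓ = k then -(w (Sum.inr ℓ)) else 0)]
    rw [Finset.sum_ite_eq' Finset.univ k (fun ℓ => -(w (Sum.inr ℓ)))]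
    simp
  rw [h2]
  ring

private lemma bridge (τ : ℕ) (a : Fin τ → ℤ) (b : ℕ → ℤ)
    (hbv : ∀ ℓ : Fin τ, b ℓ.val = a ℓ) (z : ℕ → ℤ) (k : Fin τ) :
    (∑ ℓ : Fin τ, (if ℓ ≤ k then a ℓ else 0) * z ℓ.val)
      = ∑ i ∈ Finset.range (k.val + 1), b i * z i := by
  have h1 : (∑ ℓ : Fin τ, (if ℓ ≤ k then a ℓ else 0) * z ℓ.val)
      = ∑ i ∈ Finset.range τ, (if i ≤ k.val then b i * z i else 0) := by
    rw [← Fin.sum_univ_eq_sum_range (fun i => if i ≤ k.val then b i * z i else 0) τ]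
    apply Finset.sum_congr rfl
    intro ℓ _
    by_cases h : ℓ ≤ k
    · rw [if_pos h, if_pos (Fin.le_def.mp h), hbv ℓ]
    · rw [if_neg h, if_neg (fun hh => h (Fin.le_def.mpr hh)), zero_mul]
  rw [h1, ← Finset.sum_filter]
  have h3 : (Finset.range τ).filter (fun i => i ≤ k.val) = Finset.range (k.val + 1) := by
    ext i
    simp only [Finset.mem_filter, Finset.mem_range]
    have := k.isLt
    omega
  rw [h3]

private lemma prefix_repr (τ : ℕ) (a : Fin τ → ℤ)
    (F : Matrix (Fin τ) (Fin τ ⊕ Fin τ) ℤ)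
    (hF₁ : ∀ k ℓ, F k (Sum.inl ℓ) = if ℓ ≤ k then a ℓ else 0)
    (hF₂ : ∀ k ℓ, F k (Sum.inr ℓ) = if ℓ = k then -1 else 0)
    (b : ℕ → ℤ) (hbv : ∀ ℓ : Fin τ, b ℓ.val = a ℓ)
    (w : Fin τ ⊕ Fin τ → ℤ) (y : ℕ → ℤ)
    (hyv : ∀ ℓ : Fin τ, y ℓ.val = w (Sum.inl ℓ))
    (hker : F.mulVec w = 0) (k : Fin τ) :
    w (Sum.inr k) = ∑ i ∈ Finset.range (k.val + 1), b i * y i := by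
  have h0 : F.mulVec w k = 0 := by rw [hker]; rfl
  rw [mulVec_apply τ a F hF₁ hF₂ w k] at h0
  have h1 : (∑ ℓ : Fin τ, (if ℓ ≤ k then a ℓ else 0) * w (Sum.inl ℓ))
      = ∑ i ∈ Finset.range (k.val + 1), b i * y i := by
    rw [← bridge τ a b hbv y k]
    exact Finset.sum_congr rfl (fun ℓ _ => by rw [hyv ℓ])
  rw [h1] at h0
  linarith

set_option maxHeartbeats 1000000 in
private lemma keyPos (τ : ℕ) (hτ : 2 ≤ τ) (a : Fin τ → ℤ)
    (ha : ∀ ℓ, 1 ≤ a ℓ ∧ a ℓ ≤ (τ : ℤ))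
    (F : Matrix (Fin τ) (Fin τ ⊕ Fin τ) ℤ)
    (hF₁ : ∀ k ℓ, F k (Sum.inl ℓ) = if ℓ ≤ k then a ℓ else 0)
    (hF₂ : ∀ k ℓ, F k (Sum.inr ℓ) = if ℓ = k then -1 else 0)
    (w : Fin τ ⊕ Fin τ → ℤ) (hw : InGraver F w) (k : Fin τ) :
    w (Sum.inr k) ≤ (τ : ℤ) ^ 4 := by
  by_contra hbig
  push_neg at hbig
  set b : ℕ → ℤ := fun n => if h : n < τ then a ⟨n, h⟩ else 1 with hbdef
  set y : ℕ → ℤ := fun n => if h : n < τ then w (Sum.inl ⟨n, h⟩) else 0 with hydef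
  have hbv : ∀ ℓ : Fin τ, b ℓ.val = a ℓ := fun ℓ => by
    simp only [hbdef]; rw [dif_pos ℓ.isLt]
  have hyv : ∀ ℓ : Fin τ, y ℓ.val = w (Sum.inl ℓ) := fun ℓ => by
    simp only [hydef]; rw [dif_pos ℓ.isLt]
  have hb1 : ∀ i, 1 ≤ b i := by
    intro i
    simp only [hbdef]
    by_cases h : i < τ
    · rw [dif_pos h]; exact (ha _).1
    · rw [dif_neg h]
  have hb2 : ∀ i, b i ≤ (τ : ℤ) := by
    intro i
    simp only [hbdef]
    by_cases h : i < τ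
    · rw [dif_pos h]; exact (ha _).2
    · rw [dif_neg h]; exact_mod_cast (by omega : 1 ≤ τ)
  have hy0 : ∀ i, τ ≤ i → y i = 0 := fun i hi => by
    simp only [hydef]; rw [dif_neg (by omega)]
  have hrepr : ∀ k' : Fin τ, w (Sum.inr k') = ∑ i ∈ Finset.range (k'.val + 1), b i * y i :=
    fun k' => prefix_repr τ a F hF₁ hF₂ b hbv w y hyv hw.2.1 k'
  obtain ⟨y', hconf, hbet, ⟨i0, hi0τ, hi0ne⟩, hneq⟩ :=
    core τ hτ b y hb1 hb2 hy0 (k.val + 1) (by omega) k.isLt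
      (by rw [← hrepr k]; exact Int.lt_iff_add_one_le.mp hbig)
  set w' : Fin τ ⊕ Fin τ → ℤ :=
    Sum.elim (fun ℓ : Fin τ => y' ℓ.val)
      (fun k' : Fin τ => ∑ i ∈ Finset.range (k'.val + 1), b i * y' i) with hw'def
  have hw'inl : ∀ ℓ : Fin τ, w' (Sum.inl ℓ) = y' ℓ.val := fun ℓ => rfl
  have hw'inr : ∀ k' : Fin τ,
      w' (Sum.inr k') = ∑ i ∈ Finset.range (k'.val + 1), b i * y' i := fun k' => rfl
  have hw'ker : F.mulVec w' = 0 := by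
    funext k'
    rw [mulVec_apply τ a F hF₁ hF₂ w' k']
    have h1 : (∑ ℓ : Fin τ, (if ℓ ≤ k' then a ℓ else 0) * w' (Sum.inl ℓ))
        = ∑ i ∈ Finset.range (k'.val + 1), b i * y' i := by
      rw [← bridge τ a b hbv y' k']
      exact Finset.sum_congr rfl (fun ℓ _ => by rw [hw'inl ℓ])
    rw [h1, hw'inr k']
    simp
  have hw'ne : w' ≠ 0 := by
    intro h
    have h2 := congrFun h (Sum.inl ⟨i0, hi0τ⟩)
    rw [hw'inl] at h2
    exact hi0ne (by simpa using h2)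
  have hw'conf : ConformalTo w' w := by
    intro j
    cases j with
    | inl ℓ =>
      have h2 := hconf ℓ.val
      rw [hyv ℓ] at h2
      rw [hw'inl ℓ]
      exact h2
    | inr k' =>
      have h2 := hbet (k'.val + 1)
      rw [← hrepr k'] at h2
      rw [hw'inr k']
      exact h2
  have heq := hw.2.2 w' hw'ne hw'ker hw'conf
  apply hneq
  have h3 := congrFun heq (Sum.inr k)
  rw [hw'inr k, hrepr k] at h3
  exact h3

set_option maxHeartbeats 1000000 in
/-- Every Graver basis element of `F = (G | -I)` has ℓ∞-norm at most `3 τ⁴`. -/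
theorem stmt0 (τ : ℕ) (hτ : 2 ≤ τ) (a : Fin τ → ℤ)
    (ha : ∀ ℓ, 1 ≤ a ℓ ∧ a ℓ ≤ (τ : ℤ))
    (F : Matrix (Fin τ) (Fin τ ⊕ Fin τ) ℤ)
    (hF₁ : ∀ k ℓ, F k (Sum.inl ℓ) = if ℓ ≤ k then a ℓ else 0)
    (hF₂ : ∀ k ℓ, F k (Sum.inr ℓ) = if ℓ = k then -1 else 0)
    (g : Fin τ ⊕ Fin τ → ℤ) (hg : InGraver F g) :
    ∀ i, |g i| ≤ 3 * (τ : ℤ) ^ 4 := by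
  intro i
  have h40 : (0 : ℤ) ≤ (τ : ℤ) ^ 4 := by positivity
  have hneg : InGraver F (-g) := inGraver_neg F g hg
  have habs : ∀ k : Fin τ, |g (Sum.inr k)| ≤ (τ : ℤ) ^ 4 := by
    intro k
    rw [abs_le]
    refine ⟨?_, keyPos τ hτ a ha F hF₁ hF₂ g hg k⟩
    have h2 := keyPos τ hτ a ha F hF₁ hF₂ (-g) hneg k
    have h3 : (-g) (Sum.inr k) = -(g (Sum.inr k)) := rfl
    rw [h3] at h2
    linarith
  cases i with
  | inr k =>
    have := habs k
    linarith
  | inl k =>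
    set b : ℕ → ℤ := fun n => if h : n < τ then a ⟨n, h⟩ else 1 with hbdef
    set y : ℕ → ℤ := fun n => if h : n < τ then g (Sum.inl ⟨n, h⟩) else 0 with hydef
    have hbv : ∀ ℓ : Fin τ, b ℓ.val = a ℓ := fun ℓ => by
      simp only [hbdef]; rw [dif_pos ℓ.isLt]
    have hyv : ∀ ℓ : Fin τ, y ℓ.val = g (Sum.inl ℓ) := fun ℓ => by
      simp only [hydef]; rw [dif_pos ℓ.isLt]
    have hb1 : ∀ i, 1 ≤ b i := by
      intro i
      simp only [hbdef]
      by_cases h : i < τ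
      · rw [dif_pos h]; exact (ha _).1
      · rw [dif_neg h]
    have hrepr : ∀ k' : Fin τ, g (Sum.inr k') = ∑ i ∈ Finset.range (k'.val + 1), b i * y i :=
      fun k' => prefix_repr τ a F hF₁ hF₂ b hbv g y hyv hg.2.1 k'
    have hstep : ∑ i ∈ Finset.range (k.val + 1), b i * y i
        = (∑ i ∈ Finset.range k.val, b i * y i) + b k.val * y k.val :=
      Finset.sum_range_succ _ _
    have hprev : |∑ i ∈ Finset.range k.val, b i * y i| ≤ (τ : ℤ) ^ 4 := by
      rcases Nat.eq_zero_or_pos k.val with h | h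
      · rw [h]
        simpa using h40
      · have hj : k.val - 1 < τ := by omega
        have h5 := hrepr ⟨k.val - 1, hj⟩
        have h6 : (⟨k.val - 1, hj⟩ : Fin τ).val + 1 = k.val := by
          show k.val - 1 + 1 = k.val
          omega
        rw [h6] at h5
        rw [← h5]
        exact habs _
    have hcur : |∑ i ∈ Finset.range (k.val + 1), b i * y i| ≤ (τ : ℤ) ^ 4 := by
      rw [← hrepr k]
      exact habs k
    have hby : |b k.val * y k.val| ≤ 2 * (τ : ℤ) ^ 4 := by
      have e : b k.val * y k.val = (∑ i ∈ Finset.range (k.val + 1), b i * y i)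
          - (∑ i ∈ Finset.range k.val, b i * y i) := by
        rw [hstep]; ring
      rw [e]
      have h7 := abs_add_le (∑ i ∈ Finset.range (k.val + 1), b i * y i)
        (-(∑ i ∈ Finset.range k.val, b i * y i))
      rw [← sub_eq_add_neg, abs_neg] at h7
      linarith
    have hyabs : |y k.val| ≤ 2 * (τ : ℤ) ^ 4 := by
      have h8 : |y k.val| ≤ |b k.val| * |y k.val| :=
        le_mul_of_one_le_left (abs_nonneg _) (le_trans (hb1 k.val) (le_abs_self _))
      rw [← abs_mul] at h8
      linarith
    have hgy : g (Sum.inl k) = y k.val := (hyv k).symm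
    rw [hgy]
    linarith
end

section
/- Let τ ≥ 2 and a₁,…,a_τ be positive integers each at most τ. Let F̄ = (Ḡ | H̄) be the τ × 2τ matrix where Ḡ = diag(a₁,…,a_τ) and H̄ is the bidiagonal matrix with −1 on the diagonal and 1 on the subdiagonal. Then every element of the Graver basis of F̄ has ℓ₁-norm at most C·τ⁵ for some absolute constant C. -/
set_option maxHeartbeats 1000000

lemma row_formula {τ : ℕ} (a : Fin τ → ℤ) (F : Matrix (Fin τ) (Fin τ ⊕ Fin τ) ℤ)
    (hG : ∀ k ℓ, F k (Sum.inl ℓ) = if k = ℓ then a k else 0)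
    (hH : ∀ k ℓ, F k (Sum.inr ℓ) =
      if k = ℓ then -1 else if (k : ℕ) = (ℓ : ℕ) + 1 then 1 else 0)
    (v : Fin τ ⊕ Fin τ → ℤ) (k : Fin τ) :
    F.mulVec v k = a k * v (Sum.inl k) - v (Sum.inr k) +
      (if h : 0 < (k : ℕ) then v (Sum.inr ⟨(k : ℕ) - 1, (Nat.sub_le _ _).trans_lt k.isLt⟩) else 0) := by
  have hsplit : ∀ ℓ : Fin τ, F k (Sum.inr ℓ) * v (Sum.inr ℓ) =
      (if k = ℓ then -v (Sum.inr ℓ) else 0) +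
      (if (k : ℕ) = (ℓ : ℕ) + 1 then v (Sum.inr ℓ) else 0) := by
    intro ℓ
    rw [hH]
    split_ifs with h1 h2
    · exfalso; subst h1; omega
    · ring
    · ring
    · ring
  rw [Matrix.mulVec, dotProduct, Fintype.sum_sum_type]
  have e1 : ∑ ℓ : Fin τ, F k (Sum.inl ℓ) * v (Sum.inl ℓ) = a k * v (Sum.inl k) := by
    simp only [hG, ite_mul, zero_mul]
    rw [Finset.sum_ite_eq]
    simp
  have e2 : ∑ ℓ : Fin τ, F k (Sum.inr ℓ) * v (Sum.inr ℓ) =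
      -v (Sum.inr k) + (if h : 0 < (k : ℕ) then
        v (Sum.inr ⟨(k : ℕ) - 1, (Nat.sub_le _ _).trans_lt k.isLt⟩) else 0) := by
    simp only [hsplit]
    rw [Finset.sum_add_distrib]
    congr 1
    · rw [Finset.sum_ite_eq]; simp
    · split_ifs with h
      · have hcond : ∀ ℓ : Fin τ, ((k : ℕ) = (ℓ : ℕ) + 1) ↔
            (ℓ = ⟨(k : ℕ) - 1, (Nat.sub_le _ _).trans_lt k.isLt⟩) := by
          intro ℓ
          constructor
          · intro hl; apply Fin.ext; simp; omega
          · intro hl; subst hl; simp; omega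
        simp only [hcond]
        rw [Finset.sum_ite_eq']
        simp
      · apply Finset.sum_eq_zero
        intro ℓ _
        rw [if_neg]; omega
  rw [e1, e2]; ring

lemma telescope (f : ℕ → ℤ) : ∀ M r, r ≤ M → ∑ i ∈ Finset.Ico r M, (f (i+1) - f i) = f M - f r := by
  intro M
  induction M with
  | zero => intro r hr; interval_cases r; simp
  | succ n ih =>
    intro r hr
    rcases Nat.lt_or_ge r (n+1) with h | h
    · have hrn : r ≤ n := by omega
      rw [Finset.sum_Ico_succ_top hrn, ih r hrn]; ring
    · have : r = n + 1 := by omega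
      subst this; simp

lemma big_step (f : ℕ → ℤ) (r M τ : ℕ) (hrM : r ≤ M) (hcard : M - r ≤ τ) (T : ℤ)
    (hT : 1 ≤ T) (hgap : (τ : ℤ) * (T - 1) < f M - f r) :
    ∃ p, r < p ∧ p ≤ M ∧ T ≤ f p - f (p - 1) := by
  by_contra hc
  push_neg at hc
  have hsum := telescope f M r hrM
  have hb : ∀ i ∈ Finset.Ico r M, f (i + 1) - f i ≤ T - 1 := by
    intro i hi
    simp only [Finset.mem_Ico] at hi
    have h := hc (i + 1) (by omega) (by omega)
    simp only [Nat.add_sub_cancel] at h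
    linarith
  have hle := Finset.sum_le_card_nsmul (Finset.Ico r M) _ (T - 1) hb
  rw [hsum, Nat.card_Ico, nsmul_eq_mul] at hle
  have hcard' : ((M - r : ℕ) : ℤ) ≤ (τ : ℤ) := by exact_mod_cast hcard
  have h1 : (0 : ℤ) ≤ T - 1 := by linarith
  nlinarith [mul_le_mul_of_nonneg_right hcard' h1]

lemma step_bound (t a x : ℤ) (ht : 2 ≤ t) (h1 : 1 ≤ a) (h2 : a ≤ t) (h : t ^ 2 ≤ a * x) :
    t ≤ x := by
  have hx : 0 < x := by nlinarith
  nlinarith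

lemma mul_le_sq (t a b : ℤ) (h1 : 1 ≤ a) (h2 : a ≤ t) (h3 : 1 ≤ b) (h4 : b ≤ t) :
    a * b ≤ t ^ 2 := by nlinarith

lemma numeric1 (t : ℤ) (h : 2 ≤ t) : t * (t ^ 2 - 1) + t ^ 2 ≤ 2 * t ^ 4 := by
  have h0 : (0:ℤ) ≤ t := by linarith
  have h2 : t ^ 2 ≤ t ^ 3 := by nlinarith [mul_nonneg (mul_nonneg h0 h0) (by linarith : (0:ℤ) ≤ t - 1)]
  have h3 : 2 * t ^ 3 ≤ t ^ 4 := by nlinarith [mul_nonneg (mul_nonneg (mul_nonneg h0 h0) h0) (by linarith : (0:ℤ) ≤ t - 2)]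
  have h4 : (0:ℤ) ≤ t ^ 4 := by positivity
  nlinarith

lemma walk_key (τ : ℕ) (hτ : 2 ≤ τ) (A : ℕ → ℤ) (hA : ∀ n, 1 ≤ A n ∧ A n ≤ (τ : ℤ))
    (X Z : ℕ → ℤ) (hZ0 : Z 0 = 0)
    (hrec : ∀ n, 1 ≤ n → n ≤ τ → Z n = Z (n - 1) + A n * X n)
    (hmin : ∀ X' Z' : ℕ → ℤ, Z' 0 = 0 →
      (∀ n, 1 ≤ n → n ≤ τ → Z' n = Z' (n - 1) + A n * X' n) →
      (∃ n, 1 ≤ n ∧ n ≤ τ ∧ (X' n ≠ 0 ∨ Z' n ≠ 0)) →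
      (∀ n, 1 ≤ n → n ≤ τ →
        0 ≤ X' n * X n ∧ |X' n| ≤ |X n| ∧ 0 ≤ Z' n * Z n ∧ |Z' n| ≤ |Z n|) →
      ∀ n, 1 ≤ n → n ≤ τ → X' n = X n ∧ Z' n = Z n) :
    ∀ M, 1 ≤ M → M ≤ τ → Z M ≤ 2 * (τ : ℤ) ^ 4 := by
  classical
  intro M hM1 hMτ
  by_contra hbig
  push_neg at hbig
  set T : ℤ := (τ : ℤ) ^ 2 with hT
  have hτ2 : (2 : ℤ) ≤ (τ : ℤ) := by exact_mod_cast hτ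
  have hT4 : (4 : ℤ) ≤ T := by rw [hT]; nlinarith
  have hnum := numeric1 (τ : ℤ) hτ2
  have hgap1 : (τ : ℤ) * (T - 1) + T ≤ 2 * (τ : ℤ) ^ 4 := by rw [hT]; linarith
  have hT2τ4 : T ≤ 2 * (τ : ℤ) ^ 4 := by rw [hT]; nlinarith
  have hτT : (τ : ℤ) ≤ T := by rw [hT]; nlinarith
  have hTbig : T < Z M := by linarith
  -- r : last index < M with Z r < T
  obtain ⟨r, hrle, hrP, hrmax⟩ : ∃ r, r ≤ M - 1 ∧ Z r < T ∧
      ∀ k, r < k → k ≤ M - 1 → ¬ (Z k < T) := by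
    have hP0 : Z 0 < T := by rw [hZ0]; linarith
    exact ⟨Nat.findGreatest (fun n => Z n < T) (M - 1), Nat.findGreatest_le _,
      Nat.findGreatest_spec (P := fun n => Z n < T) (Nat.zero_le _) hP0,
      fun k h1 h2 => Nat.findGreatest_is_greatest h1 h2⟩
  have hband1 : ∀ k, r < k → k ≤ M → T ≤ Z k := by
    intro k h1 h2
    rcases Nat.lt_or_ge k M with h | h
    · have := hrmax k h1 (by omega)
      linarith [not_lt.mp this]
    · have : k = M := by omega
      subst this; linarith
  -- big up-step p in (r, M]
  have exP : ∃ p, r < p ∧ p ≤ M ∧ T ≤ Z p - Z (p - 1) :=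
    big_step Z r M τ (by omega) (by omega) T (by linarith)
      (by linarith)
  obtain ⟨p, hrp, hpM, hpstep⟩ := exP
  have hp1 : 1 ≤ p := by omega
  have hpτ : p ≤ τ := by omega
  have hApXp : A p * X p = Z p - Z (p - 1) := by
    have := hrec p hp1 hpτ; linarith
  have hXp_ge : (τ : ℤ) ≤ X p :=
    step_bound (τ : ℤ) (A p) (X p) hτ2 (hA p).1 (hA p).2
      (by rw [hApXp, ← hT]; linarith)
  have hXp_pos : 0 < X p := by linarith
  -- case on existence of a return below T after M
  by_cases hq : ∃ k, M < k ∧ k ≤ τ ∧ Z k < T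
  · -- find minimal such
    obtain ⟨q0, ⟨hq0M, hq0τ, hq0Z⟩, hq0m⟩ : ∃ q0, (M < q0 ∧ q0 ≤ τ ∧ Z q0 < T) ∧
        ∀ k, k < q0 → ¬ (M < k ∧ k ≤ τ ∧ Z k < T) :=
      ⟨Nat.find hq, Nat.find_spec hq, fun k hk => Nat.find_min hq hk⟩
    have hq0min : ∀ k, M ≤ k → k < q0 → T ≤ Z k := by
      intro k h1 h2
      rcases Nat.lt_or_ge M k with h | h
      · have := hq0m k h2
        push_neg at this
        have := this h (by omega)
        linarith
      · have : k = M := by omega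
        subst this; linarith
    -- big down-step q' in (M, q0]
    have exQ : ∃ q', M < q' ∧ q' ≤ q0 ∧ T ≤ (-Z q') - (-Z (q' - 1)) :=
      big_step (fun n => -Z n) M q0 τ (by omega) (by omega) T (by linarith)
        (by show (τ : ℤ) * (T - 1) < -Z q0 - -Z M; linarith)
    obtain ⟨q', hMq', hq'q0, hq'step'⟩ := exQ
    have hq'step : Z q' - Z (q' - 1) ≤ -T := by linarith
    have hq'τ : q' ≤ τ := by omega
    have hq'1 : 1 ≤ q' := by omega
    have hpq' : p < q' := by omega
    have hAqXq : A q' * X q' = Z q' - Z (q' - 1) := by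
      have := hrec q' hq'1 hq'τ; linarith
    have hXq_le : X q' ≤ -(τ : ℤ) := by
      have := step_bound (τ : ℤ) (A q') (-X q') hτ2 (hA q').1 (hA q').2
        (by rw [mul_neg, hAqXq]; rw [hT] at hq'step; linarith)
      linarith
    have hXq_neg : X q' < 0 := by linarith
    -- band: Z k ≥ T for p ≤ k < q'
    have hband : ∀ k, p ≤ k → k < q' → T ≤ Z k := by
      intro k h1 h2
      rcases le_or_gt k M with h | h
      · exact hband1 k (by omega) h
      · exact hq0min k (by omega) (by omega)
    -- construct the cycle
    set w : ℤ := A p * A q' with hw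
    have hw_pos : 0 < w := by
      have := (hA p).1; have := (hA q').1; positivity
    have hwT : w ≤ T := by
      rw [hw, hT]
      exact mul_le_sq (τ : ℤ) (A p) (A q') (hA p).1 (hA p).2 (hA q').1 (hA q').2
    set X' : ℕ → ℤ := fun n => if n = p then A q' else if n = q' then -A p else 0 with hX'
    set Z' : ℕ → ℤ := fun n => if p ≤ n ∧ n < q' then w else 0 with hZ'
    have hZ'0 : Z' 0 = 0 := by
      simp only [hZ']; rw [if_neg]; omega
    have hrec' : ∀ n, 1 ≤ n → n ≤ τ → Z' n = Z' (n - 1) + A n * X' n := by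
      intro n h1 h2
      simp only [hX', hZ']
      rcases Nat.lt_trichotomy n p with h | h | h
      · rw [if_neg (by omega), if_neg (by omega), if_neg (by omega), if_neg (by omega)]
        ring
      · subst h
        rw [if_pos (by omega), if_neg (by omega), if_pos rfl]
        ring
      · rcases Nat.lt_trichotomy n q' with h' | h' | h'
        · rw [if_pos (by omega), if_pos (by omega), if_neg (by omega), if_neg (by omega)]
          ring
        · subst h'
          rw [if_neg (by omega), if_pos (by omega), if_neg (by omega), if_pos rfl]
          ring
        · rw [if_neg (by omega), if_neg (by omega), if_neg (by omega), if_neg (by omega)]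
          ring
    have hnz : ∃ n, 1 ≤ n ∧ n ≤ τ ∧ (X' n ≠ 0 ∨ Z' n ≠ 0) := by
      refine ⟨p, hp1, hpτ, Or.inl ?_⟩
      simp only [hX', if_pos rfl]
      have := (hA q').1; omega
    have hconf : ∀ n, 1 ≤ n → n ≤ τ →
        0 ≤ X' n * X n ∧ |X' n| ≤ |X n| ∧ 0 ≤ Z' n * Z n ∧ |Z' n| ≤ |Z n| := by
      intro n h1 h2
      have hzpart : 0 ≤ Z' n * Z n ∧ |Z' n| ≤ |Z n| := by
        simp only [hZ']
        by_cases h : p ≤ n ∧ n < q'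
        · rw [if_pos h]
          have hZn := hband n h.1 h.2
          constructor
          · exact mul_nonneg (le_of_lt hw_pos) (by linarith)
          · rw [abs_of_pos hw_pos, abs_of_pos (by linarith : (0:ℤ) < Z n)]
            linarith
        · rw [if_neg h]; simp
      have hxpart : 0 ≤ X' n * X n ∧ |X' n| ≤ |X n| := by
        simp only [hX']
        rcases Nat.lt_trichotomy n p with h | h | h
        · rw [if_neg (by omega), if_neg (by omega)]; simp
        · subst h
          rw [if_pos rfl]
          have h3 := (hA q').1; have h4 := (hA q').2
          constructor
          · exact mul_nonneg (by linarith) (le_of_lt hXp_pos)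
          · rw [abs_of_pos (by linarith), abs_of_pos hXp_pos]; linarith
        · rcases eq_or_ne n q' with h' | h'
          · subst h'
            rw [if_neg (by omega), if_pos rfl]
            have h3 := (hA p).1; have h4 := (hA p).2
            constructor
            · exact mul_nonneg_of_nonpos_of_nonpos (by linarith) (by linarith)
            · rw [abs_neg, abs_of_pos (by linarith), abs_of_neg hXq_neg]; linarith
          · rw [if_neg (by omega), if_neg h']; simp
      exact ⟨hxpart.1, hxpart.2, hzpart.1, hzpart.2⟩
    have heq := hmin X' Z' hZ'0 hrec' hnz hconf M hM1 hMτ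
    have hZM : Z' M = Z M := heq.2
    simp only [hZ'] at hZM
    rw [if_pos ⟨hpM, hMq'⟩] at hZM
    linarith
  · -- no return: tail vector
    push_neg at hq
    have hband2 : ∀ k, p ≤ k → k ≤ τ → T ≤ Z k := by
      intro k h1 h2
      rcases le_or_gt k M with h | h
      · exact hband1 k (by omega) h
      · exact hq k h h2
    set X' : ℕ → ℤ := fun n => if n = p then 1 else 0 with hX'
    set Z' : ℕ → ℤ := fun n => if p ≤ n then A p else 0 with hZ'
    have hZ'0 : Z' 0 = 0 := by
      simp only [hZ']; rw [if_neg]; omega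
    have hrec' : ∀ n, 1 ≤ n → n ≤ τ → Z' n = Z' (n - 1) + A n * X' n := by
      intro n h1 h2
      simp only [hX', hZ']
      rcases Nat.lt_trichotomy n p with h | h | h
      · rw [if_neg (by omega), if_neg (by omega), if_neg (by omega)]; ring
      · subst h
        rw [if_pos le_rfl, if_neg (by omega), if_pos rfl]; ring
      · rw [if_pos (by omega), if_pos (by omega), if_neg (by omega)]; ring
    have hnz : ∃ n, 1 ≤ n ∧ n ≤ τ ∧ (X' n ≠ 0 ∨ Z' n ≠ 0) := by
      refine ⟨p, hp1, hpτ, Or.inl ?_⟩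
      simp only [hX', if_pos rfl]; omega
    have hconf : ∀ n, 1 ≤ n → n ≤ τ →
        0 ≤ X' n * X n ∧ |X' n| ≤ |X n| ∧ 0 ≤ Z' n * Z n ∧ |Z' n| ≤ |Z n| := by
      intro n h1 h2
      have hzpart : 0 ≤ Z' n * Z n ∧ |Z' n| ≤ |Z n| := by
        simp only [hZ']
        by_cases h : p ≤ n
        · rw [if_pos h]
          have hZn := hband2 n h h2
          have h3 := (hA p).1; have h4 := (hA p).2
          constructor
          · exact mul_nonneg (by linarith) (by linarith)
          · rw [abs_of_pos (by linarith : (0:ℤ) < A p),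
              abs_of_pos (by linarith : (0:ℤ) < Z n)]
            have : (τ : ℤ) ≤ T := by rw [hT]; nlinarith
            linarith
        · rw [if_neg h]; simp
      have hxpart : 0 ≤ X' n * X n ∧ |X' n| ≤ |X n| := by
        simp only [hX']
        by_cases h : n = p
        · subst h
          rw [if_pos rfl]
          constructor
          · simpa using le_of_lt hXp_pos
          · rw [abs_one, abs_of_pos hXp_pos]; linarith
        · rw [if_neg h]; simp
      exact ⟨hxpart.1, hxpart.2, hzpart.1, hzpart.2⟩
    have heq := hmin X' Z' hZ'0 hrec' hnz hconf M hM1 hMτ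
    have hZM : Z' M = Z M := heq.2
    simp only [hZ'] at hZM
    rw [if_pos hpM] at hZM
    have h4 := (hA p).2
    linarith

/-- There is an absolute constant `C` such that every Graver basis element of
`F̄ = (diag(a) | H̄)` has ℓ₁-norm at most `C τ⁵`. -/
theorem stmt1 : ∃ C : ℕ, ∀ (τ : ℕ), 2 ≤ τ → ∀ (a : Fin τ → ℤ),
    (∀ k, 1 ≤ a k ∧ a k ≤ (τ : ℤ)) →
    ∀ (F : Matrix (Fin τ) (Fin τ ⊕ Fin τ) ℤ),
    (∀ k ℓ, F k (Sum.inl ℓ) = if k = ℓ then a k else 0) →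
    (∀ k ℓ, F k (Sum.inr ℓ) =
      if k = ℓ then -1 else if (k : ℕ) = (ℓ : ℕ) + 1 then 1 else 0) →
    ∀ g : Fin τ ⊕ Fin τ → ℤ, InGraver F g →
    (∑ i, |g i|) ≤ (C : ℤ) * (τ : ℤ) ^ 5 := by
  refine ⟨6, ?_⟩
  intro τ hτ a ha F hG hH g hg
  obtain ⟨hgne, hker, hmax⟩ := hg
  have hτ2 : (2 : ℤ) ≤ (τ : ℤ) := by exact_mod_cast hτ
  -- ℕ-indexed versions
  set X : ℕ → ℤ := fun n => if h : 1 ≤ n ∧ n ≤ τ then g (Sum.inl ⟨n - 1, by omega⟩) else 0 with hXdef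
  set Z : ℕ → ℤ := fun n => if h : 1 ≤ n ∧ n ≤ τ then g (Sum.inr ⟨n - 1, by omega⟩) else 0 with hZdef
  set A : ℕ → ℤ := fun n => if h : 1 ≤ n ∧ n ≤ τ then a ⟨n - 1, by omega⟩ else 1 with hAdef
  have hA : ∀ n, 1 ≤ A n ∧ A n ≤ (τ : ℤ) := by
    intro n
    simp only [hAdef]
    split_ifs with h
    · exact ha _
    · exact ⟨le_refl 1, by linarith⟩
  have hfin : ∀ (k : Fin τ), 1 ≤ (k : ℕ) + 1 ∧ (k : ℕ) + 1 ≤ τ :=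
    fun k => ⟨Nat.succ_le_succ (Nat.zero_le _), k.isLt⟩
  have hXk : ∀ k : Fin τ, X ((k : ℕ) + 1) = g (Sum.inl k) := by
    intro k
    simp only [hXdef]
    rw [dif_pos (hfin k)]
    exact congrArg (fun t => g (Sum.inl t)) (Fin.ext (show (k:ℕ) + 1 - 1 = (k:ℕ) by omega))
  have hZk : ∀ k : Fin τ, Z ((k : ℕ) + 1) = g (Sum.inr k) := by
    intro k
    simp only [hZdef]
    rw [dif_pos (hfin k)]
    exact congrArg (fun t => g (Sum.inr t)) (Fin.ext (show (k:ℕ) + 1 - 1 = (k:ℕ) by omega))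
  have hAk : ∀ k : Fin τ, A ((k : ℕ) + 1) = a k := by
    intro k
    simp only [hAdef]
    rw [dif_pos (hfin k)]
    exact congrArg a (Fin.ext (show (k:ℕ) + 1 - 1 = (k:ℕ) by omega))
  have hZ0 : Z 0 = 0 := by
    simp only [hZdef]
    rw [dif_neg (by omega)]
  -- recurrence for g
  have hrec : ∀ n, 1 ≤ n → n ≤ τ → Z n = Z (n - 1) + A n * X n := by
    intro n h1 h2
    have hlt : n - 1 < τ := by omega
    set k : Fin τ := ⟨n - 1, hlt⟩ with hk
    have hkval : (k : ℕ) = n - 1 := rfl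
    have hrow := congrFun hker k
    rw [row_formula a F hG hH g k] at hrow
    have hZn : Z n = g (Sum.inr k) := by
      simp only [hZdef]; rw [dif_pos ⟨h1, h2⟩]
    have hXn : X n = g (Sum.inl k) := by
      simp only [hXdef]; rw [dif_pos ⟨h1, h2⟩]
    have hAn : A n = a k := by
      simp only [hAdef]; rw [dif_pos ⟨h1, h2⟩]
    have hZn1 : Z (n - 1) =
        (if h : 0 < (k : ℕ) then g (Sum.inr ⟨(k : ℕ) - 1, (Nat.sub_le _ _).trans_lt k.isLt⟩) else 0) := by
      by_cases hn : 2 ≤ n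
      · rw [dif_pos (show 0 < (k : ℕ) by omega)]
        simp only [hZdef]
        rw [dif_pos (show 1 ≤ n - 1 ∧ n - 1 ≤ τ by omega)]
      · have hn1 : n = 1 := by omega
        subst hn1
        rw [dif_neg (by omega)]
        exact hZ0
    simp only [Pi.zero_apply] at hrow
    rw [hZn, hXn, hAn, hZn1]
    linarith
  -- minimality transfer
  have hmin : ∀ X' Z' : ℕ → ℤ, Z' 0 = 0 →
      (∀ n, 1 ≤ n → n ≤ τ → Z' n = Z' (n - 1) + A n * X' n) →
      (∃ n, 1 ≤ n ∧ n ≤ τ ∧ (X' n ≠ 0 ∨ Z' n ≠ 0)) →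
      (∀ n, 1 ≤ n → n ≤ τ →
        0 ≤ X' n * X n ∧ |X' n| ≤ |X n| ∧ 0 ≤ Z' n * Z n ∧ |Z' n| ≤ |Z n|) →
      ∀ n, 1 ≤ n → n ≤ τ → X' n = X n ∧ Z' n = Z n := by
    intro X' Z' hZ'0 hrec' hnz hconf
    set g' : Fin τ ⊕ Fin τ → ℤ :=
      Sum.elim (fun k : Fin τ => X' ((k : ℕ) + 1)) (fun k : Fin τ => Z' ((k : ℕ) + 1)) with hg'
    have hg'l : ∀ k : Fin τ, g' (Sum.inl k) = X' ((k : ℕ) + 1) := fun k => rfl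
    have hg'r : ∀ k : Fin τ, g' (Sum.inr k) = Z' ((k : ℕ) + 1) := fun k => rfl
    have hker' : F.mulVec g' = 0 := by
      funext k
      rw [row_formula a F hG hH g' k]
      have hr := hrec' ((k : ℕ) + 1) (by omega) (hfin k).2
      simp only [Nat.add_sub_cancel] at hr
      have hdite : (if h : 0 < (k : ℕ) then
          g' (Sum.inr ⟨(k : ℕ) - 1, (Nat.sub_le _ _).trans_lt k.isLt⟩) else 0) = Z' (k : ℕ) := by
        by_cases h : 0 < (k : ℕ)
        · rw [dif_pos h]
          show Z' ((k : ℕ) - 1 + 1) = Z' (k : ℕ)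
          congr 1
          omega
        · rw [dif_neg h]
          have : (k : ℕ) = 0 := by omega
          rw [this, hZ'0]
      rw [hdite, hg'l, hg'r, hAk k] at *
      simp only [Pi.zero_apply]
      linarith [hr]
    have hg'ne : g' ≠ 0 := by
      obtain ⟨n, h1, h2, hor⟩ := hnz
      intro h0
      have hlt : n - 1 < τ := by omega
      have e1 : g' (Sum.inl ⟨n - 1, hlt⟩) = 0 := by rw [h0]; rfl
      have e2 : g' (Sum.inr ⟨n - 1, hlt⟩) = 0 := by rw [h0]; rfl
      rw [hg'l] at e1
      rw [hg'r] at e2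
      have hn : (⟨n - 1, hlt⟩ : Fin τ).val + 1 = n := by show n - 1 + 1 = n; omega
      rw [hn] at e1 e2
      rcases hor with h | h
      · exact h e1
      · exact h e2
    have hcf : ConformalTo g' g := by
      intro i
      rcases i with k | k
      · have := hconf ((k : ℕ) + 1) (by omega) (hfin k).2
        rw [hXk k] at this
        exact ⟨this.1, this.2.1⟩
      · have := hconf ((k : ℕ) + 1) (by omega) (hfin k).2
        rw [hZk k] at this
        exact ⟨this.2.2.1, this.2.2.2⟩
    have heq := hmax g' hg'ne hker' hcf
    intro n h1 h2
    have hlt : n - 1 < τ := by omega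
    have hn : ((⟨n - 1, hlt⟩ : Fin τ) : ℕ) + 1 = n := by show n - 1 + 1 = n; omega
    constructor
    · have := congrFun heq (Sum.inl ⟨n - 1, hlt⟩)
      rw [hg'l, hn] at this
      rw [this]
      simp only [hXdef]
      rw [dif_pos ⟨h1, h2⟩]
    · have := congrFun heq (Sum.inr ⟨n - 1, hlt⟩)
      rw [hg'r, hn] at this
      rw [this]
      simp only [hZdef]
      rw [dif_pos ⟨h1, h2⟩]
  -- apply walk_key to g and -g
  have hup : ∀ M, 1 ≤ M → M ≤ τ → Z M ≤ 2 * (τ : ℤ) ^ 4 :=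
    walk_key τ hτ A hA X Z hZ0 hrec hmin
  have hdown : ∀ M, 1 ≤ M → M ≤ τ → -Z M ≤ 2 * (τ : ℤ) ^ 4 := by
    apply walk_key τ hτ A hA (fun n => -X n) (fun n => -Z n)
      (by show -Z 0 = 0; rw [hZ0]; ring)
    · intro n h1 h2
      show -Z n = -Z (n - 1) + A n * -X n
      have := hrec n h1 h2
      linarith [this]
    · intro X' Z' hZ'0 hrec' hnz hconf
      have hrecneg : ∀ n, 1 ≤ n → n ≤ τ → -Z' n = -Z' (n - 1) + A n * -X' n := by
        intro n h1 h2
        have := hrec' n h1 h2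
        linarith [this]
      have hnzneg : ∃ n, 1 ≤ n ∧ n ≤ τ ∧ (-X' n ≠ 0 ∨ -Z' n ≠ 0) := by
        obtain ⟨n, h1, h2, hor⟩ := hnz
        refine ⟨n, h1, h2, ?_⟩
        rcases hor with h | h
        · exact Or.inl (neg_ne_zero.mpr h)
        · exact Or.inr (neg_ne_zero.mpr h)
      have hconfneg : ∀ n, 1 ≤ n → n ≤ τ →
          0 ≤ -X' n * X n ∧ |(-X' n)| ≤ |X n| ∧ 0 ≤ -Z' n * Z n ∧ |(-Z' n)| ≤ |Z n| := by
        intro n h1 h2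
        obtain ⟨c1, c2, c3, c4⟩ := hconf n h1 h2
        have e1 : X' n * -X n = -X' n * X n := by ring
        have e2 : Z' n * -Z n = -Z' n * Z n := by ring
        rw [e1] at c1
        rw [e2] at c3
        exact ⟨c1, by simpa using c2, c3, by simpa using c4⟩
      have h := hmin (fun n => -X' n) (fun n => -Z' n)
        (by show -Z' 0 = 0; rw [hZ'0]; ring) hrecneg hnzneg hconfneg
      intro n h1 h2
      obtain ⟨e1, e2⟩ := h n h1 h2
      have e1' : -X' n = X n := e1
      have e2' : -Z' n = Z n := e2
      constructor
      · show X' n = -X n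
        linarith [e1']
      · show Z' n = -Z n
        linarith [e2']
  have hZabs : ∀ n, n ≤ τ → |Z n| ≤ 2 * (τ : ℤ) ^ 4 := by
    intro n hn
    rcases Nat.eq_zero_or_pos n with h | h
    · subst h; rw [hZ0]; simp only [abs_zero]; positivity
    · exact abs_le.mpr ⟨by linarith [hdown n h hn], hup n h hn⟩
  have hXabs : ∀ n, 1 ≤ n → n ≤ τ → |X n| ≤ 4 * (τ : ℤ) ^ 4 := by
    intro n h1 h2
    have hr := hrec n h1 h2
    have ha1 := (hA n).1
    have hax : |X n| ≤ |A n * X n| := by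
      rw [abs_mul]
      have h0 : (0 : ℤ) ≤ |X n| := abs_nonneg _
      have h1' : (1 : ℤ) ≤ |A n| := by
        rw [abs_of_pos (by linarith : (0:ℤ) < A n)]; exact ha1
      nlinarith
    have : |A n * X n| = |Z n - Z (n - 1)| := by rw [show A n * X n = Z n - Z (n-1) by linarith]
    rw [this] at hax
    have hb1 := hZabs n h2
    have hb2 := hZabs (n - 1) (by omega)
    calc |X n| ≤ |Z n - Z (n-1)| := hax
      _ ≤ |Z n| + |Z (n-1)| := abs_sub _ _
      _ ≤ 4 * (τ : ℤ) ^ 4 := by linarith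
  -- final summation
  rw [Fintype.sum_sum_type]
  have hs1 : ∑ k : Fin τ, |g (Sum.inl k)| ≤ (τ : ℤ) * (4 * (τ : ℤ) ^ 4) := by
    have := Finset.sum_le_card_nsmul Finset.univ (fun k : Fin τ => |g (Sum.inl k)|)
      (4 * (τ : ℤ) ^ 4) (by
        intro k _
        show |g (Sum.inl k)| ≤ 4 * (τ : ℤ) ^ 4
        rw [← hXk k]
        exact hXabs _ (by omega) (hfin k).2)
    rwa [Finset.card_univ, Fintype.card_fin, nsmul_eq_mul] at this
  have hs2 : ∑ k : Fin τ, |g (Sum.inr k)| ≤ (τ : ℤ) * (2 * (τ : ℤ) ^ 4) := by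
    have := Finset.sum_le_card_nsmul Finset.univ (fun k : Fin τ => |g (Sum.inr k)|)
      (2 * (τ : ℤ) ^ 4) (by
        intro k _
        show |g (Sum.inr k)| ≤ 2 * (τ : ℤ) ^ 4
        rw [← hZk k]
        exact hZabs _ (hfin k).2)
    rwa [Finset.card_univ, Fintype.card_fin, nsmul_eq_mul] at this
  have : ((6 : ℕ) : ℤ) = 6 := by norm_num
  rw [this]
  nlinarith [hs1, hs2]
end

section
/- Let τ ≥ 2, let a₁,…,a_τ ∈ ℤ with 1 ≤ a_k ≤ τ for all k, and let (x,z) ∈ ℤ^{2τ} satisfy z_k − z_{k−1} = a_k x_k for all k ∈ [τ] (with z₀ := 0). If there exists k with z_k − z_{k−1} > 2τ³ + 1 and z_k ≥ τ³ and moreover z_q ≥ τ for all q ∈ [k, τ], then the vector (g,h) defined by g_k = 1, h_k = h_{k+1} = ⋯ = h_τ = a_k, and all other coordinates zero, is a nonzero integer vector in the kernel of the same constraint system and is conformal to (x,z). -/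
/-- Hill-cutting, first case: if the step at `k` is large, `z k ≥ τ³`, and the tail of `z`
stays at least `τ`, then the vector `(g, h)` with `g k = 1`, `h k = ⋯ = h τ = a k` is a
nonzero kernel element of the constraint system conformal to `(x, z)`. -/
theorem stmt2 (τ : ℕ) (hτ : 2 ≤ τ) (a x z : ℕ → ℤ)
    (ha : ∀ q ∈ Finset.Icc 1 τ, 1 ≤ a q ∧ a q ≤ (τ : ℤ))
    (hz0 : z 0 = 0)
    (hker : ∀ q ∈ Finset.Icc 1 τ, z q - z (q - 1) = a q * x q)
    (k : ℕ) (hk : k ∈ Finset.Icc 1 τ)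
    (hbig : 2 * (τ : ℤ) ^ 3 + 1 < z k - z (k - 1))
    (hzk : (τ : ℤ) ^ 3 ≤ z k)
    (htail : ∀ q, k ≤ q → q ≤ τ → (τ : ℤ) ≤ z q) :
    let g : ℕ → ℤ := fun i => if i = k then 1 else 0
    let h : ℕ → ℤ := fun i => if k ≤ i ∧ i ≤ τ then a k else 0
    (¬ ∀ q ∈ Finset.Icc 1 τ, g q = 0 ∧ h q = 0) ∧
    h 0 = 0 ∧
    (∀ q ∈ Finset.Icc 1 τ, h q - h (q - 1) = a q * g q) ∧
    (∀ q ∈ Finset.Icc 1 τ, 0 ≤ g q * x q ∧ |g q| ≤ |x q|) ∧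
    (∀ q ∈ Finset.Icc 1 τ, 0 ≤ h q * z q ∧ |h q| ≤ |z q|) := by
  intro g h
  obtain ⟨hk1, hkτ⟩ := Finset.mem_Icc.mp hk
  obtain ⟨hak1, hakτ⟩ := ha k hk
  have hτZ : (2:ℤ) ≤ (τ:ℤ) := by exact_mod_cast hτ
  refine ⟨?_, ?_, ?_, ?_, ?_⟩
  · intro H
    have := (H k hk).1
    simp [g] at this
  · simp only [h]
    rw [if_neg (by omega)]
  · intro q hq
    obtain ⟨hq1, hqτ⟩ := Finset.mem_Icc.mp hq
    simp only [g, h]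
    rcases lt_trichotomy q k with hlt | heq | hgt
    · rw [if_neg (by omega), if_neg (by omega), if_neg (by omega)]
      ring
    · rw [if_pos (by omega), if_neg (by omega), if_pos (by omega), heq]
      ring
    · rw [if_pos (by omega), if_pos (by omega), if_neg (by omega)]
      ring
  · intro q hq
    obtain ⟨hq1, hqτ⟩ := Finset.mem_Icc.mp hq
    by_cases h3 : q = k
    · subst h3
      have hkerq := hker q hq
      have hpos : 0 < a q * x q := by
        nlinarith [pow_nonneg (by linarith : (0:ℤ) ≤ (τ:ℤ)) 3]
      have hx : 0 < x q := by
        rcases mul_pos_iff.mp hpos with ⟨_, hx⟩ | ⟨h1, _⟩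
        · exact hx
        · omega
      simp only [g, if_pos rfl]
      constructor
      · linarith
      · rw [abs_of_pos hx, abs_one]
        omega
    · simp [g, h3]
  · intro q hq
    obtain ⟨hq1, hqτ⟩ := Finset.mem_Icc.mp hq
    by_cases h1 : k ≤ q ∧ q ≤ τ
    · have hzq : (τ:ℤ) ≤ z q := htail q h1.1 h1.2
      simp only [h, if_pos h1]
      constructor
      · exact mul_nonneg (by omega) (by linarith)
      · rw [abs_of_pos (by omega : (0:ℤ) < a k), abs_of_pos (by linarith : (0:ℤ) < z q)]
        omega
    · simp [h, h1]
end

section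
/- Let τ ≥ 2, let a₁,…,a_τ ∈ ℤ with 1 ≤ a_q ≤ τ for all q, and let (x,z) ∈ ℤ^{2τ} satisfy z_q − z_{q−1} = a_q x_q for all q (with z₀ := 0). Suppose z_k ≥ τ³ for some k, and there exists ℓ' > k with z_{ℓ'} < τ. Then there exists ℓ > k with x_ℓ < −τ, and taking ℓ minimal with this property, the vector (g,h) with g_k = a_ℓ, g_ℓ = −a_k, h_q = a_k·a_ℓ for k ≤ q ≤ ℓ−1, and all other coordinates zero, lies in the kernel of the constraint system and is conformal to (x,z), provided additionally a_k x_k ≥ τ³. -/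
set_option maxHeartbeats 1600000 in
/-- Hill-cutting, second case: if `z k ≥ τ³` (with `a k · x k ≥ τ³`) and `z` later drops
below `τ`, then there is a minimal `ℓ > k` with `x ℓ < -τ`, and the corresponding
vector `(g, h)` is a kernel element conformal to `(x, z)`. -/
theorem stmt3 (τ : ℕ) (hτ : 2 ≤ τ) (a x z : ℕ → ℤ)
    (ha : ∀ q ∈ Finset.Icc 1 τ, 1 ≤ a q ∧ a q ≤ (τ : ℤ))
    (hz0 : z 0 = 0)
    (hker : ∀ q ∈ Finset.Icc 1 τ, z q - z (q - 1) = a q * x q)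
    (k : ℕ) (hk : k ∈ Finset.Icc 1 τ)
    (hzk : (τ : ℤ) ^ 3 ≤ z k)
    (hdrop : ∃ ℓ', k < ℓ' ∧ ℓ' ≤ τ ∧ z ℓ' < (τ : ℤ))
    (hxk : (τ : ℤ) ^ 3 ≤ a k * x k) :
    ∃ ℓ, (k < ℓ ∧ ℓ ≤ τ ∧ x ℓ < -(τ : ℤ)) ∧
      (∀ ℓ'', k < ℓ'' → ℓ'' < ℓ → ¬ (x ℓ'' < -(τ : ℤ))) ∧
      (let g : ℕ → ℤ := fun i => if i = k then a ℓ else if i = ℓ then -(a k) else 0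
       let h : ℕ → ℤ := fun i => if k ≤ i ∧ i ≤ ℓ - 1 then a k * a ℓ else 0
       h 0 = 0 ∧
       (∀ q ∈ Finset.Icc 1 τ, h q - h (q - 1) = a q * g q) ∧
       (∀ q ∈ Finset.Icc 1 τ, 0 ≤ g q * x q ∧ |g q| ≤ |x q|) ∧
       (∀ q ∈ Finset.Icc 1 τ, 0 ≤ h q * z q ∧ |h q| ≤ |z q|)) := by
  classical
  obtain ⟨hk1, hkτ⟩ := Finset.mem_Icc.mp hk
  have hτ2 : (2 : ℤ) ≤ (τ : ℤ) := by exact_mod_cast hτ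
  -- telescoping
  have tele : ∀ m, k ≤ m → m ≤ τ → z m = z k + ∑ j ∈ Finset.Ioc k m, a j * x j := by
    intro m hm hmτ
    induction m with
    | zero => omega
    | succ n ih =>
      rcases Nat.lt_or_ge k (n + 1) with h | h
      · have hkn : k ≤ n := Nat.lt_succ_iff.mp h
        have ihn := ih hkn (by omega)
        have hstep := hker (n + 1) (Finset.mem_Icc.mpr ⟨by omega, hmτ⟩)
        simp only [Nat.add_sub_cancel] at hstep
        rw [Finset.sum_Ioc_succ_top hkn]
        linarith
      · have hkm : k = n + 1 := le_antisymm hm h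
        subst hkm
        simp
  -- lower bound on z m if no big negative step
  have key : ∀ m, k ≤ m → m ≤ τ → (∀ j, k < j → j ≤ m → -(τ : ℤ) ≤ x j) →
      (τ : ℤ) ^ 3 - ((m - k : ℕ) : ℤ) * (τ : ℤ) ^ 2 ≤ z m := by
    intro m hm hmτ hx
    rw [tele m hm hmτ]
    have hbound : ∀ j ∈ Finset.Ioc k m, -((τ : ℤ) ^ 2) ≤ a j * x j := by
      intro j hj
      obtain ⟨hj1, hj2⟩ := Finset.mem_Ioc.mp hj
      obtain ⟨ha1, ha2⟩ := ha j (Finset.mem_Icc.mpr ⟨by omega, by omega⟩)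
      have hxj := hx j hj1 hj2
      nlinarith
    have hsum := Finset.card_nsmul_le_sum (Finset.Ioc k m) _ _ hbound
    rw [Nat.card_Ioc, nsmul_eq_mul] at hsum
    have : -(((m - k : ℕ) : ℤ) * (τ : ℤ) ^ 2) ≤ ∑ j ∈ Finset.Ioc k m, a j * x j := by
      rw [neg_mul_eq_mul_neg] at *; linarith [hsum]
    linarith
  obtain ⟨ℓ', hℓ'k, hℓ'τ, hℓ'z⟩ := hdrop
  have hex : ∃ n, k < n ∧ n ≤ τ ∧ x n < -(τ : ℤ) := by
    by_contra hcon
    push_neg at hcon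
    have hlow := key ℓ' (le_of_lt hℓ'k) hℓ'τ
      (fun j hj1 hj2 => hcon j hj1 (le_trans hj2 hℓ'τ))
    have hmk : ((ℓ' - k : ℕ) : ℤ) ≤ (τ : ℤ) - 1 := by
      have h1 : ℓ' - k ≤ τ - 1 := by omega
      have h2 : ((ℓ' - k : ℕ) : ℤ) ≤ ((τ - 1 : ℕ) : ℤ) := by exact_mod_cast h1
      have h3 : ((τ - 1 : ℕ) : ℤ) = (τ : ℤ) - 1 := by
        have : 1 ≤ τ := by omega
        push_cast [this]; ring
      linarith [h2, h3.le]
    nlinarith [hℓ'z, hlow]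
  refine ⟨Nat.find hex, Nat.find_spec hex, ?_, ?_⟩
  · intro ℓ'' h1 h2 h3
    exact Nat.find_min hex h2 ⟨h1, by
      have := (Nat.find_spec hex).2.1; omega, h3⟩
  · set ℓ := Nat.find hex with hℓdef
    obtain ⟨hkℓ, hℓτ, hxℓ⟩ : k < ℓ ∧ ℓ ≤ τ ∧ x ℓ < -(τ : ℤ) := Nat.find_spec hex
    have hmin : ∀ j, k < j → j < ℓ → -(τ : ℤ) ≤ x j := by
      intro j h1 h2
      by_contra hc
      push_neg at hc
      exact Nat.find_min hex h2 ⟨h1, by omega, hc⟩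
    clear_value ℓ
    obtain ⟨hak1, hak2⟩ := ha k hk
    obtain ⟨haℓ1, haℓ2⟩ := ha ℓ (Finset.mem_Icc.mpr ⟨by omega, hℓτ⟩)
    have hxkpos : (τ : ℤ) ^ 2 ≤ x k := by nlinarith
    have zb : ∀ q, k ≤ q → q ≤ ℓ - 1 → (τ : ℤ) ^ 2 ≤ z q := by
      intro q hq1 hq2
      have hqτ : q ≤ τ := by omega
      have hlow := key q hq1 hqτ (fun j hj1 hj2 => hmin j hj1 (by omega))
      have hmk : ((q - k : ℕ) : ℤ) ≤ (τ : ℤ) - 1 := by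
        have h1 : q - k ≤ τ - 1 := by omega
        have h2 : ((q - k : ℕ) : ℤ) ≤ ((τ - 1 : ℕ) : ℤ) := by exact_mod_cast h1
        have h3 : ((τ - 1 : ℕ) : ℤ) = (τ : ℤ) - 1 := by
          have : 1 ≤ τ := by omega
          push_cast [this]; ring
        linarith [h2, h3.le]
      nlinarith [hlow]
    refine ⟨?_, ?_, ?_, ?_⟩
    · dsimp only
      have hc : ¬(k ≤ 0 ∧ 0 ≤ ℓ - 1) := by omega
      rw [if_neg hc]
    · intro q hq
      dsimp only
      obtain ⟨hq1, hq2⟩ := Finset.mem_Icc.mp hq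
      by_cases hqk : q = k
      · have c1 : k ≤ q ∧ q ≤ ℓ - 1 := by omega
        have c2 : ¬(k ≤ q - 1 ∧ q - 1 ≤ ℓ - 1) := by omega
        rw [if_pos c1, if_neg c2, if_pos hqk, hqk]
        ring
      · by_cases hqℓ : q = ℓ
        · have c1 : ¬(k ≤ q ∧ q ≤ ℓ - 1) := by omega
          have c2 : k ≤ q - 1 ∧ q - 1 ≤ ℓ - 1 := ⟨by omega, by omega⟩
          rw [if_neg c1, if_pos c2, if_neg hqk, if_pos hqℓ, hqℓ]
          ring
        · rw [if_neg hqk, if_neg hqℓ, mul_zero]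
          by_cases hc : k ≤ q ∧ q ≤ ℓ - 1
          · have hc' : k ≤ q - 1 ∧ q - 1 ≤ ℓ - 1 := by omega
            rw [if_pos hc, if_pos hc']
            ring
          · have hc' : ¬(k ≤ q - 1 ∧ q - 1 ≤ ℓ - 1) := by omega
            rw [if_neg hc, if_neg hc']
            ring
    · intro q hq
      dsimp only
      by_cases hqk : q = k
      · rw [if_pos hqk, hqk]
        constructor
        · nlinarith
        · rw [abs_of_pos (by linarith : (0:ℤ) < a ℓ),
            abs_of_pos (by nlinarith : (0:ℤ) < x k)]
          nlinarith
      · by_cases hqℓ : q = ℓ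
        · rw [if_neg hqk, if_pos hqℓ, hqℓ]
          constructor
          · nlinarith
          · rw [abs_neg, abs_of_pos (by linarith : (0:ℤ) < a k),
              abs_of_neg (by nlinarith : x ℓ < 0)]
            nlinarith
        · rw [if_neg hqk, if_neg hqℓ]
          simp [abs_nonneg]
    · intro q hq
      dsimp only
      obtain ⟨hq1, hq2⟩ := Finset.mem_Icc.mp hq
      by_cases hc : k ≤ q ∧ q ≤ ℓ - 1
      · rw [if_pos hc]
        have hzq := zb q hc.1 hc.2
        have hp1 : (0:ℤ) < a k * a ℓ := mul_pos (by linarith) (by linarith)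
        have hp2 : (0:ℤ) < z q := by nlinarith
        constructor
        · exact le_of_lt (mul_pos hp1 hp2)
        · rw [abs_of_pos (by nlinarith : (0:ℤ) < a k * a ℓ),
            abs_of_pos (by nlinarith : (0:ℤ) < z q)]
          nlinarith
      · rw [if_neg hc]
        simp [abs_nonneg]
end

section
/- Let f : ℝ^{2t} → ℝ be a separable quadratic function f(x) = Σ_{ℓ} (α_ℓ x_ℓ² + β_ℓ x_ℓ). Suppose f̃(x) = Σ_ℓ (α̃_ℓ x_ℓ² + β̃_ℓ x_ℓ) is equivalent to f on [−1,2]^{2t} (meaning f(x) ≤ f(y) ⟺ f̃(x) ≤ f̃(y) for all integer points x, y in [−1,2]^{2t}), and suppose α_j = α_k and β_j = β_k for two fixed coordinates j ≠ k. Then β̃_j = β̃_k and α̃_j = α̃_k. -/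
/-- If a separable quadratic `f̃` is equivalent to `f` on the integer points of
`[-1,2]^{2t}` and `f` has identical coefficients at coordinates `j ≠ k`, then so
does `f̃`. -/
theorem stmt5 (t : ℕ) (α β αt βt : Fin (2 * t) → ℝ) (j k : Fin (2 * t)) (hjk : j ≠ k)
    (hα : α j = α k) (hβ : β j = β k)
    (f ft : (Fin (2 * t) → ℝ) → ℝ)
    (hf : ∀ v, f v = ∑ ℓ, (α ℓ * (v ℓ) ^ 2 + β ℓ * v ℓ))
    (hft : ∀ v, ft v = ∑ ℓ, (αt ℓ * (v ℓ) ^ 2 + βt ℓ * v ℓ))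
    (hequiv : ∀ x y : Fin (2 * t) → ℤ,
      (∀ i, -1 ≤ x i ∧ x i ≤ 2) → (∀ i, -1 ≤ y i ∧ y i ≤ 2) →
      (f (fun i => (x i : ℝ)) ≤ f (fun i => (y i : ℝ)) ↔
       ft (fun i => (x i : ℝ)) ≤ ft (fun i => (y i : ℝ)))) :
    βt j = βt k ∧ αt j = αt k := by
  have hsum : ∀ (g : Fin (2 * t) → ℝ), (∀ ℓ, ℓ ≠ j → ℓ ≠ k → g ℓ = 0) →
      ∑ ℓ, g ℓ = g j + g k := by
    intro g hg
    rw [← Finset.sum_subset (Finset.subset_univ ({j, k} : Finset (Fin (2 * t))))]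
    · rw [Finset.sum_pair hjk]
    · intro x _ hx
      simp only [Finset.mem_insert, Finset.mem_singleton, not_or] at hx
      exact hg x hx.1 hx.2
  -- generic test point constructor
  have key : ∀ (a b : ℤ), -1 ≤ a → a ≤ 2 → -1 ≤ b → b ≤ 2 →
      (f (fun i => ((if i = j then a else if i = k then b else 0 : ℤ) : ℝ)) =
        α j * (a : ℝ) ^ 2 + β j * a + (α k * (b : ℝ) ^ 2 + β k * b)) ∧
      (ft (fun i => ((if i = j then a else if i = k then b else 0 : ℤ) : ℝ)) =
        αt j * (a : ℝ) ^ 2 + βt j * a + (αt k * (b : ℝ) ^ 2 + βt k * b)) := by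
    intro a b _ _ _ _
    constructor
    · rw [hf, hsum]
      · simp [hjk, Ne.symm hjk]
      · intro ℓ h1 h2; simp [h1, h2]
    · rw [hft, hsum]
      · simp [hjk, Ne.symm hjk]
      · intro ℓ h1 h2; simp [h1, h2]
  have bd : ∀ (a b : ℤ), -1 ≤ a → a ≤ 2 → -1 ≤ b → b ≤ 2 →
      ∀ i : Fin (2 * t), -1 ≤ (if i = j then a else if i = k then b else 0 : ℤ) ∧
        (if i = j then a else if i = k then b else 0 : ℤ) ≤ 2 := by
    intro a b h1 h2 h3 h4 i
    split_ifs <;> omega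
  -- first test: (1, -1) vs (-1, 1)
  have e1 := hequiv _ _ (bd 1 (-1) (by norm_num) (by norm_num) (by norm_num) (by norm_num))
    (bd (-1) 1 (by norm_num) (by norm_num) (by norm_num) (by norm_num))
  have e1' := hequiv _ _ (bd (-1) 1 (by norm_num) (by norm_num) (by norm_num) (by norm_num))
    (bd 1 (-1) (by norm_num) (by norm_num) (by norm_num) (by norm_num))
  obtain ⟨fA, ftA⟩ := key 1 (-1) (by norm_num) (by norm_num) (by norm_num) (by norm_num)
  obtain ⟨fB, ftB⟩ := key (-1) 1 (by norm_num) (by norm_num) (by norm_num) (by norm_num)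
  rw [fA, fB, ftA, ftB] at e1 e1'
  push_cast at e1 e1' fA fB ftA ftB
  have hb : βt j = βt k := by
    have h1 := e1.mp (by nlinarith [hα, hβ])
    have h2 := e1'.mp (by nlinarith [hα, hβ])
    nlinarith [h1, h2]
  refine ⟨hb, ?_⟩
  -- second test: (2, 1) vs (1, 2)
  have e2 := hequiv _ _ (bd 2 1 (by norm_num) (by norm_num) (by norm_num) (by norm_num))
    (bd 1 2 (by norm_num) (by norm_num) (by norm_num) (by norm_num))
  have e2' := hequiv _ _ (bd 1 2 (by norm_num) (by norm_num) (by norm_num) (by norm_num))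
    (bd 2 1 (by norm_num) (by norm_num) (by norm_num) (by norm_num))
  obtain ⟨fC, ftC⟩ := key 2 1 (by norm_num) (by norm_num) (by norm_num) (by norm_num)
  obtain ⟨fD, ftD⟩ := key 1 2 (by norm_num) (by norm_num) (by norm_num) (by norm_num)
  rw [fC, fD, ftC, ftD] at e2 e2'
  push_cast at e2 e2'
  have h1 := e2.mp (by nlinarith [hα, hβ])
  have h2 := e2'.mp (by nlinarith [hα, hβ])
  nlinarith [h1, h2, hb]
end

section
/- Let X ⊆ ℕ^d be a finite set of nonnegative integer vectors and b ∈ cone_ℕ(X), i.e., b = Σ_{x∈X} λ_x x for some λ ∈ ℕ^X. Then there exists a subset X̃ ⊆ X with b ∈ cone_ℕ(X̃) and |X̃| ≤ ⟨b⟩, where ⟨b⟩ = Σᵢ (1 + ⌈log₂(bᵢ + 1)⌉) is the binary encoding length of b. -/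
/-- Eisenbrand–Shmonin, part 1: a vector in the integer cone of a finite set of
nonnegative integer vectors is in the integer cone of a subset of size at most the
binary encoding length `⟨b⟩ = Σᵢ (1 + ⌈log₂(bᵢ+1)⌉)`. -/
theorem stmt7 (d : ℕ) (X : Finset (Fin d → ℕ)) (b : Fin d → ℕ)
    (lam : (Fin d → ℕ) → ℕ) (hb : b = ∑ x ∈ X, lam x • x) :
    ∃ Xt ⊆ X, (∃ mu : (Fin d → ℕ) → ℕ, b = ∑ x ∈ Xt, mu x • x) ∧
      Xt.card ≤ ∑ i, (1 + Nat.clog 2 (b i + 1)) := by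
  classical
  set P : Finset (Fin d → ℕ) → Prop := fun S => ∃ mu : (Fin d → ℕ) → ℕ, b = ∑ x ∈ S, mu x • x with hP
  have hXmem : X ∈ X.powerset.filter P := by
    simp only [Finset.mem_filter, Finset.mem_powerset, hP]
    exact ⟨Finset.Subset.refl X, lam, hb⟩
  obtain ⟨Xt, hXtmem, hmin⟩ :=
    (X.powerset.filter P).exists_min_image Finset.card ⟨X, hXmem⟩
  simp only [Finset.mem_filter, Finset.mem_powerset, hP] at hXtmem
  obtain ⟨hXtsub, mu, hmu⟩ := hXtmem
  have hmin' : ∀ S ⊆ X, (∃ mu : (Fin d → ℕ) → ℕ, b = ∑ x ∈ S, mu x • x) → Xt.card ≤ S.card := by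
    intro S hS hPS
    exact hmin S (by simp only [Finset.mem_filter, Finset.mem_powerset, hP]; exact ⟨hS, hPS⟩)
  -- all multiplicities are nonzero
  have hmupos : ∀ x ∈ Xt, mu x ≠ 0 := by
    have hsub : Xt.filter (fun x => mu x ≠ 0) ⊆ Xt := Finset.filter_subset _ _
    have hrep : b = ∑ x ∈ Xt.filter (fun x => mu x ≠ 0), mu x • x := by
      rw [hmu]
      refine (Finset.sum_filter_of_ne ?_).symm
      intro x _ h hne
      simp [hne] at h
    have hc : Xt.card ≤ (Xt.filter (fun x => mu x ≠ 0)).card :=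
      hmin' _ (hsub.trans hXtsub) ⟨mu, hrep⟩
    have heq : Xt.filter (fun x => mu x ≠ 0) = Xt :=
      Finset.eq_of_subset_of_card_le hsub hc
    intro x hx
    have : x ∈ Xt.filter (fun x => mu x ≠ 0) := by rw [heq]; exact hx
    exact (Finset.mem_filter.mp this).2
  -- key swap lemma
  have key : ∀ S' T' : Finset (Fin d → ℕ), S' ⊆ Xt → T' ⊆ Xt → Disjoint S' T' →
      T'.Nonempty → (∑ x ∈ S', x) = (∑ x ∈ T', x) → False := by
    intro S' T' hS' hT' hdisj hne hsum
    obtain ⟨x₀, hx₀, hx₀min⟩ := T'.exists_min_image mu hne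
    set m := mu x₀ with hm
    set mu' : (Fin d → ℕ) → ℕ :=
      fun x => if x ∈ T' then mu x - m else mu x + (if x ∈ S' then m else 0) with hmu'
    have hpt : ∀ x ∈ Xt, mu' x + (if x ∈ T' then m else 0)
        = mu x + (if x ∈ S' then m else 0) := by
      intro x hx
      by_cases hxT : x ∈ T'
      · have hxS : x ∉ S' := fun hxS => (Finset.disjoint_left.mp hdisj hxS hxT)
        simp [hmu', hxT, hxS, Nat.sub_add_cancel (hx₀min x hxT)]
      · simp [hmu', hxT]
    have e1 : ∀ (U : Finset (Fin d → ℕ)), U ⊆ Xt → ∀ g : (Fin d → ℕ) → ℕ,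
        ∑ x ∈ Xt, (g x + (if x ∈ U then m else 0)) • x
        = (∑ x ∈ Xt, g x • x) + m • ∑ x ∈ U, x := by
      intro U hU g
      have hind : ∑ x ∈ Xt, (if x ∈ U then m else 0) • x = m • ∑ x ∈ U, x := by
        calc ∑ x ∈ Xt, (if x ∈ U then m else 0) • x
            = ∑ x ∈ Xt, (if x ∈ U then m • x else 0) := by
              refine Finset.sum_congr rfl fun x _ => ?_
              split <;> simp
          _ = ∑ x ∈ Xt ∩ U, m • x := Finset.sum_ite_mem _ _ _
          _ = ∑ x ∈ U, m • x := by rw [Finset.inter_eq_right.mpr hU]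
          _ = m • ∑ x ∈ U, x := (Finset.smul_sum).symm
      calc ∑ x ∈ Xt, (g x + (if x ∈ U then m else 0)) • x
          = ∑ x ∈ Xt, (g x • x + (if x ∈ U then m else 0) • x) := by
            refine Finset.sum_congr rfl fun x _ => ?_
            rw [add_smul]
        _ = (∑ x ∈ Xt, g x • x) + ∑ x ∈ Xt, (if x ∈ U then m else 0) • x :=
            Finset.sum_add_distrib
        _ = (∑ x ∈ Xt, g x • x) + m • ∑ x ∈ U, x := by rw [hind]
    have hsum2 : ∑ x ∈ Xt, mu' x • x = b := by
      have h1 : ∑ x ∈ Xt, (mu' x + (if x ∈ T' then m else 0)) • x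
          = ∑ x ∈ Xt, (mu x + (if x ∈ S' then m else 0)) • x :=
        Finset.sum_congr rfl (fun x hx => by rw [hpt x hx])
      rw [e1 T' hT' mu', e1 S' hS' mu, ← hsum] at h1
      exact add_right_cancel h1 |>.trans hmu.symm
    have hx₀Xt : x₀ ∈ Xt := hT' hx₀
    have hrep : b = ∑ x ∈ Xt.erase x₀, mu' x • x := by
      rw [← hsum2, ← Finset.add_sum_erase Xt _ hx₀Xt]
      have h0 : mu' x₀ = 0 := by simp [hmu', hx₀, hm]
      simp [h0]
    have hcard := hmin' (Xt.erase x₀) ((Finset.erase_subset _ _).trans hXtsub) ⟨mu', hrep⟩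
    have hlt : (Xt.erase x₀).card < Xt.card := Finset.card_erase_lt_of_mem hx₀Xt
    omega
  -- injectivity of subset sums
  have hinj : Set.InjOn (fun S : Finset (Fin d → ℕ) => ∑ x ∈ S, x) Xt.powerset := by
    intro S hS T hT hST
    simp only [Finset.coe_powerset, Set.mem_setOf_eq, Set.mem_preimage,
      Finset.mem_powerset] at hS hT
    by_contra hne
    have hSsub : S \ T ⊆ Xt := (Finset.sdiff_subset).trans hS
    have hTsub : T \ S ⊆ Xt := (Finset.sdiff_subset).trans hT
    have heq : (∑ x ∈ S \ T, x) = (∑ x ∈ T \ S, x) := by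
      have h1 := Finset.sum_inter_add_sum_sdiff S T (fun x => x)
      have h2 := Finset.sum_inter_add_sum_sdiff T S (fun x => x)
      rw [Finset.inter_comm] at h2
      have : (∑ x ∈ S ∩ T, x) + (∑ x ∈ S \ T, x)
          = (∑ x ∈ S ∩ T, x) + (∑ x ∈ T \ S, x) := by
        rw [h1, h2]; exact hST
      exact add_left_cancel this
    by_cases hTne : (T \ S).Nonempty
    · exact key (S \ T) (T \ S) hSsub hTsub (disjoint_sdiff_sdiff) hTne heq
    · have hTS : T \ S = ∅ := Finset.not_nonempty_iff_eq_empty.mp hTne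
      have hSne : (S \ T).Nonempty := by
        rw [Finset.nonempty_iff_ne_empty]
        intro hST0
        apply hne
        exact Finset.Subset.antisymm (Finset.sdiff_eq_empty_iff_subset.mp hST0)
          (Finset.sdiff_eq_empty_iff_subset.mp hTS)
      exact key (T \ S) (S \ T) hTsub hSsub (disjoint_sdiff_sdiff) hSne heq.symm
  refine ⟨Xt, hXtsub, ⟨mu, hmu⟩, ?_⟩
  -- each subset sum lies in the box
  have hmaps : ∀ S ∈ Xt.powerset,
      (∑ x ∈ S, x) ∈ Fintype.piFinset (fun i => Finset.range (b i + 1)) := by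
    intro S hS
    rw [Finset.mem_powerset] at hS
    rw [Fintype.mem_piFinset]
    intro i
    rw [Finset.mem_range]
    refine Nat.lt_succ_of_le ?_
    calc (∑ x ∈ S, x) i = ∑ x ∈ S, x i := by rw [Finset.sum_apply]
      _ ≤ ∑ x ∈ Xt, x i := Finset.sum_le_sum_of_subset hS
      _ ≤ ∑ x ∈ Xt, mu x * x i := Finset.sum_le_sum (fun x hx =>
          Nat.le_mul_of_pos_left _ (Nat.pos_of_ne_zero (hmupos x hx)))
      _ = b i := by rw [hmu]; simp [Finset.sum_apply]
  have hcard : Xt.powerset.card ≤ (Fintype.piFinset (fun i => Finset.range (b i + 1))).card :=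
    Finset.card_le_card_of_injOn _ hmaps hinj
  rw [Finset.card_powerset, Fintype.card_piFinset] at hcard
  simp only [Finset.card_range] at hcard
  have h2 : ∏ i, (b i + 1) ≤ 2 ^ ∑ i, Nat.clog 2 (b i + 1) := by
    rw [← Finset.prod_pow_eq_pow_sum]
    exact Finset.prod_le_prod (fun i _ => Nat.zero_le _)
      (fun i _ => Nat.le_pow_clog one_lt_two _)
  have hfin : Xt.card ≤ ∑ i, Nat.clog 2 (b i + 1) :=
    (Nat.pow_le_pow_iff_right one_lt_two).mp (hcard.trans h2)
  calc Xt.card ≤ ∑ i, Nat.clog 2 (b i + 1) := hfin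
    _ ≤ ∑ i, (1 + Nat.clog 2 (b i + 1)) :=
        Finset.sum_le_sum (fun i _ => Nat.le_add_left _ _)
end

section
/- Let X ⊆ ℤ^d be a finite set with M = max_{x∈X} ‖x‖_∞, and let b ∈ cone_ℕ(X). Then there exists X̃ ⊆ X with b ∈ cone_ℕ(X̃) and |X̃| ≤ 2d·log₂(4dM). -/
open Finset

theorem lemA (k : ℕ) : ∀ d : ℕ, (k+1)^(d+1) ≤ k^(d+1) + (d+1)*(k+1)^d := by
  intro d
  induction d with
  | zero => simp
  | succ e ih =>
    have h1 : (k+1)^(e+2) = (k+1)^(e+1) * (k+1) := by ring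
    have h2 : (k+1)^(e+1) * (k+1) ≤ (k^(e+1) + (e+1)*(k+1)^e) * (k+1) :=
      Nat.mul_le_mul_right _ ih
    have h3 : (k^(e+1) + (e+1)*(k+1)^e) * (k+1)
        = k^(e+1)*k + k^(e+1) + (e+1)*(k+1)^(e+1) := by ring
    have h4 : k^(e+1) ≤ (k+1)^(e+1) := Nat.pow_le_pow_left (by omega) _
    calc (k+1)^(e+2) = (k+1)^(e+1)*(k+1) := h1
      _ ≤ k^(e+1)*k + k^(e+1) + (e+1)*(k+1)^(e+1) := by rw [← h3]; exact h2
      _ ≤ k^(e+2) + (e+2)*(k+1)^(e+1) := by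
          have h5 : k^(e+1)*k = k^(e+2) := by ring
          linarith

theorem lemB {d k : ℕ} (h : 2*d ≤ k) : (k+1)^d ≤ 2*k^d := by
  cases d with
  | zero => simp
  | succ e =>
    have hA := lemA k e
    have h2 : 2*(e+1)*(k+1)^e ≤ (k+1)*(k+1)^e :=
      Nat.mul_le_mul_right _ (by omega)
    have h3 : (k+1)*(k+1)^e = (k+1)^(e+1) := by ring
    have h4 : 2*(e+1)*(k+1)^e = 2*((e+1)*(k+1)^e) := by ring
    linarith

theorem lem2L : ∀ L : ℕ, 3 ≤ L → 2*L+1 ≤ 2^L := by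
  intro L
  induction L with
  | zero => omega
  | succ n ih =>
    intro h
    rcases Nat.lt_or_ge n 3 with h3 | h3
    · interval_cases n <;> simp <;> omega
    · have := ih h3
      have h1 : (1:ℕ) ≤ 2^n := Nat.one_le_two_pow
      have : 2^(n+1) = 2*2^n := by ring
      omega

theorem keyStep {d M : ℕ} (hd : 1 ≤ d) (hM : 1 ≤ M) {j : ℕ} (hj : 2*d ≤ j)
    (ih : (2*j*M+1)^d < 2^j) : (2*(j+1)*M+1)^d < 2^(j+1) := by
  have hid : (j+1)*(2*j*M+1) = j*(2*(j+1)*M+1) + 1 := by ring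
  have h1 : j*(2*(j+1)*M+1) ≤ (j+1)*(2*j*M+1) := by omega
  have h2 : (j*(2*(j+1)*M+1))^d ≤ ((j+1)*(2*j*M+1))^d := Nat.pow_le_pow_left h1 _
  rw [Nat.mul_pow, Nat.mul_pow] at h2
  have h3 : (j+1)^d * (2*j*M+1)^d ≤ 2*j^d * (2*j*M+1)^d :=
    Nat.mul_le_mul_right _ (lemB hj)
  have hjpos : 0 < j^d := Nat.pow_pos (by omega)
  have h4 : (2*(j+1)*M+1)^d ≤ 2*(2*j*M+1)^d := by
    have := h2.trans h3
    have h5 : 2*j^d * (2*j*M+1)^d = j^d * (2*(2*j*M+1)^d) := by ring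
    rw [h5] at this
    exact Nat.le_of_mul_le_mul_left this hjpos
  calc (2*(j+1)*M+1)^d ≤ 2*(2*j*M+1)^d := h4
    _ < 2*2^j := by omega
    _ = 2^(j+1) := by ring

theorem keyBase {d M : ℕ} (hd : 1 ≤ d) (hM : 1 ≤ M) :
    (2*(2*d*(Nat.log 2 (4*d*M))+1)*M+1)^d < 2^(2*d*(Nat.log 2 (4*d*M))+1) := by
  set L := Nat.log 2 (4*d*M) with hLdef
  have hne : 4*d*M ≠ 0 := by positivity
  have hL1 : 2^L ≤ 4*d*M := Nat.pow_log_le_self 2 hne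
  have hL2 : 4*d*M < 2^(L+1) := Nat.lt_pow_succ_log_self (by norm_num) _
  have h4 : 4 ≤ 4*d*M := by nlinarith
  have hL2' : (2:ℕ)^2 < 2^(L+1) := by omega
  have hLge2 : 2 ≤ L := by
    have := (Nat.pow_lt_pow_iff_right (by norm_num : 1 < 2)).mp hL2'
    omega
  have hu : 2^L = 2^(L-1)*2 := by
    have := pow_succ 2 (L-1)
    rwa [Nat.sub_add_cancel (by omega)] at this
  have hv : 2^(L+1) = 2^L*2 := pow_succ 2 L
  have h4L : 4^L = 2^L * 2^L := by
    rw [← pow_add, show (4:ℕ) = 2^2 by norm_num, ← pow_mul]; ring_nf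
  have hdm4 : 4*d*M = 4*(d*M) := by ring
  have hmain : 2*(2*d*L+1)*M+1 ≤ 4^L := by
    rcases Nat.lt_or_ge L 3 with h3 | h3
    · have hL2e : L = 2 := by omega
      rw [hL2e] at hL2
      norm_num at hL2
      have hdm : d*M = 1 := by nlinarith
      have hd1 : d = 1 := Nat.eq_one_of_mul_eq_one_right hdm
      have hM1 : M = 1 := Nat.eq_one_of_mul_eq_one_left hdm
      subst hd1 hM1
      rw [hL2e]; norm_num
    · have ha : d*M ≤ 2^(L-1) - 1 := by omega
      have hpos1 : 1 ≤ 2^(L-1) := Nat.one_le_two_pow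
      have hdm : 4*d*M ≤ 2^L*2 - 4 := by omega
      have h2M : 2*M ≤ 2^L - 2 := by
        have hdM1 : M ≤ d*M := Nat.le_mul_of_pos_left _ (by omega)
        omega
      have hlhs : 2*(2*d*L+1)*M+1 = L*(4*d*M) + 2*M + 1 := by ring
      have h2L1 : 2*L+1 ≤ 2^L := lem2L L h3
      have hLb : L*(4*d*M) ≤ L*(2^L*2-4) := Nat.mul_le_mul_left _ hdm
      have hLexp : L*(2^L*2-4) = 2*L*2^L - 4*L := by rw [Nat.mul_sub]; ring_nf
      have hfin : (2*L+1)*2^L ≤ 2^L*2^L := Nat.mul_le_mul_right _ h2L1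
      have h4Lpos : 4*L ≤ 2*L*2^L := by nlinarith [Nat.one_le_two_pow (n := L)]
      nlinarith [hfin, hLb, h2M, h2L1]
  have hpow : (2*(2*d*L+1)*M+1)^d ≤ (4^L)^d := Nat.pow_le_pow_left hmain _
  have h4Ld : ((4:ℕ)^L)^d = 2^(2*d*L) := by
    rw [show (4:ℕ) = 2^2 by norm_num, ← pow_mul, ← pow_mul]; ring_nf
  have : (2^(2*d*L) : ℕ) < 2^(2*d*L+1) := Nat.pow_lt_pow_succ (by norm_num)
  omega

theorem keyArith {d M k : ℕ} (hd : 1 ≤ d) (hM : 1 ≤ M)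
    (h : 2^k ≤ (2*k*M+1)^d) : 2^k ≤ (4*d*M)^(2*d) := by
  by_contra hcon
  push_neg at hcon
  set L := Nat.log 2 (4*d*M) with hLdef
  have hne : 4*d*M ≠ 0 := by positivity
  have hL1 : 2^L ≤ 4*d*M := Nat.pow_log_le_self 2 hne
  have hk : 2^(2*d*L) < 2^k := by
    calc 2^(2*d*L) = (2^L)^(2*d) := by rw [← pow_mul, Nat.mul_comm (2*d) L]
      _ ≤ (4*d*M)^(2*d) := Nat.pow_le_pow_left hL1 _
      _ < 2^k := hcon
  have hkge : 2*d*L+1 ≤ k := by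
    have := (Nat.pow_lt_pow_iff_right (by norm_num : 1 < 2)).mp hk
    omega
  have hLge2 : 2 ≤ L := by
    have h4 : (2:ℕ)^2 ≤ 4*d*M := by nlinarith
    have hL2 : 4*d*M < 2^(L+1) := Nat.lt_pow_succ_log_self (by norm_num) _
    have := (Nat.pow_lt_pow_iff_right (by norm_num : 1 < 2)).mp (lt_of_le_of_lt h4 hL2)
    omega
  have hclaim : ∀ j, 2*d*L+1 ≤ j → (2*j*M+1)^d < 2^j := by
    intro j hj
    induction j, hj using Nat.le_induction with
    | base => exact keyBase hd hM
    | succ n hn ih => exact keyStep hd hM (by nlinarith) ih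
  exact absurd (hclaim k hkge) (by omega)

/-- The swap lemma: a doubly-minimal representation admits no disjoint equal-sum pairs. -/
theorem swap_lemma {d : ℕ} {X : Finset (Fin d → ℤ)} {b : Fin d → ℤ}
    {μ : (Fin d → ℤ) → ℕ} [DecidablePred fun x => μ x ≠ 0] (hbμ : b = ∑ x ∈ X, μ x • x)
    (S T : Finset (Fin d → ℤ)) (hS : S ⊆ X.filter (fun x => μ x ≠ 0))
    (hT : T ⊆ X.filter (fun x => μ x ≠ 0)) (hdisj : Disjoint S T)
    (hsum : ∑ x ∈ S, x = ∑ x ∈ T, x) (hSne : S.Nonempty) (hcard : T.card ≤ S.card)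
    (hmin1 : ∀ ν : (Fin d → ℤ) → ℕ, b = ∑ x ∈ X, ν x • x → ∑ x ∈ X, μ x ≤ ∑ x ∈ X, ν x)
    (hmin2 : ∀ ν : (Fin d → ℤ) → ℕ, b = ∑ x ∈ X, ν x • x → ∑ x ∈ X, ν x = ∑ x ∈ X, μ x →
      (X.filter (fun x => μ x ≠ 0)).card ≤ (X.filter (fun x => ν x ≠ 0)).card) : False := by
  classical
  have hSX : S ⊆ X := hS.trans (filter_subset _ _)
  have hTX : T ⊆ X := hT.trans (filter_subset _ _)
  set m := S.inf' hSne μ with hmdef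
  obtain ⟨x₀, hx₀S, hx₀⟩ := Finset.exists_mem_eq_inf' hSne μ
  have hmle : ∀ x ∈ S, m ≤ μ x := fun x hx => Finset.inf'_le μ hx
  have hm0 : μ x₀ ≠ 0 := by
    have := hS hx₀S; rw [mem_filter] at this; exact this.2
  have hm1 : 1 ≤ m := by rw [← hmdef] at hx₀; omega
  set ν : (Fin d → ℤ) → ℕ :=
    fun x => if x ∈ S then μ x - m else if x ∈ T then μ x + m else μ x with hν
  have hterm : ∀ x ∈ X, (ν x • x : Fin d → ℤ)
      = μ x • x + (if x ∈ T then m • x else 0) - (if x ∈ S then m • x else 0) := by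
    intro x hx
    by_cases hxS : x ∈ S
    · have hxT : x ∉ T := Finset.disjoint_left.mp hdisj hxS
      have hle := hmle x hxS
      simp only [hν, hxS, hxT, if_true, if_false]
      have h1 : (μ x - m) • x + m • x = μ x • (x : Fin d → ℤ) := by
        rw [← add_smul]; congr 1; omega
      have := eq_sub_of_add_eq h1
      rw [this]; abel
    · by_cases hxT : x ∈ T
      · simp only [hν, hxS, hxT, if_true, if_false, add_smul]; abel
      · simp only [hν, hxS, hxT, if_false]; abel
  have hbν : b = ∑ x ∈ X, ν x • x := by
    rw [Finset.sum_congr rfl hterm, Finset.sum_sub_distrib, Finset.sum_add_distrib,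
      Finset.sum_ite_mem, Finset.sum_ite_mem,
      Finset.inter_eq_right.mpr hTX, Finset.inter_eq_right.mpr hSX,
      ← Finset.smul_sum, ← Finset.smul_sum, hsum, ← hbμ]
    abel
  have haux : ∀ (U : Finset (Fin d → ℤ)), U ⊆ X →
      ∑ x ∈ X, (if x ∈ U then m else 0) = m * U.card := by
    intro U hU
    rw [Finset.sum_ite_mem, Finset.inter_eq_right.mpr hU, Finset.sum_const, smul_eq_mul,
      mul_comm]
  have htot : ∑ x ∈ X, ν x + m * S.card = ∑ x ∈ X, μ x + m * T.card := by
    have hpt : ∀ x ∈ X, ν x + (if x ∈ S then m else 0) = μ x + (if x ∈ T then m else 0) := by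
      intro x hx
      by_cases hxS : x ∈ S
      · have hxT : x ∉ T := Finset.disjoint_left.mp hdisj hxS
        have := hmle x hxS
        simp only [hν, hxS, hxT, if_true, if_false]
        omega
      · by_cases hxT : x ∈ T <;> simp [hν, hxS, hxT]
    calc ∑ x ∈ X, ν x + m * S.card
        = ∑ x ∈ X, (ν x + if x ∈ S then m else 0) := by
          rw [Finset.sum_add_distrib, haux S hSX]
      _ = ∑ x ∈ X, (μ x + if x ∈ T then m else 0) := Finset.sum_congr rfl hpt
      _ = ∑ x ∈ X, μ x + m * T.card := by rw [Finset.sum_add_distrib, haux T hTX]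
  have hle := hmin1 ν hbν
  have hmt : m * T.card ≤ m * S.card := Nat.mul_le_mul_left m hcard
  have hsums : ∑ x ∈ X, ν x = ∑ x ∈ X, μ x := by omega
  have hcards : m * S.card = m * T.card := by omega
  have hx₀0 : ν x₀ = 0 := by
    simp only [hν, hx₀S, if_true]; omega
  have hsub : X.filter (fun x => ν x ≠ 0) ⊆ (X.filter (fun x => μ x ≠ 0)).erase x₀ := by
    intro x hx
    rw [mem_filter] at hx
    rw [Finset.mem_erase, mem_filter]
    refine ⟨?_, hx.1, ?_⟩
    · rintro rfl; exact hx.2 hx₀0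
    · by_cases hxS : x ∈ S
      · have := hmle x hxS; omega
      · by_cases hxT : x ∈ T
        · have := hT hxT; rw [mem_filter] at this; exact this.2
        · have : ν x = μ x := by simp [hν, hxS, hxT]
          rw [← this]; exact hx.2
  have hx₀mem : x₀ ∈ X.filter (fun x => μ x ≠ 0) := hS hx₀S
  have hlt : ((X.filter (fun x => μ x ≠ 0)).erase x₀).card
      < (X.filter (fun x => μ x ≠ 0)).card := Finset.card_erase_lt_of_mem hx₀mem
  have hge := hmin2 ν hbν hsums
  have := (Finset.card_le_card hsub)
  have : (X.filter (fun x => ν x ≠ 0)).card = (X.filter (fun x => ν x ≠ 0)).card := rfl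
  omega

/-- Eisenbrand–Shmonin, part 2: with `M` bounding the ℓ∞-norms of the vectors in `X`,
any `b ∈ cone_ℕ(X)` lies in the integer cone of a subset of size at most `2d log₂(4dM)`. -/
theorem stmt8 (d : ℕ) (X : Finset (Fin d → ℤ)) (M : ℕ)
    (hM : ∀ x ∈ X, ∀ i, |x i| ≤ (M : ℤ))
    (b : Fin d → ℤ) (lam : (Fin d → ℤ) → ℕ) (hb : b = ∑ x ∈ X, lam x • x) :
    ∃ Xt ⊆ X, (∃ mu : (Fin d → ℤ) → ℕ, b = ∑ x ∈ Xt, mu x • x) ∧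
      (Xt.card : ℝ) ≤ 2 * d * Real.logb 2 (4 * d * M) := by
  classical
  rcases Nat.eq_zero_or_pos d with hd0 | hd
  · subst hd0
    refine ⟨∅, Finset.empty_subset _, ⟨fun _ => 0, funext fun i => i.elim0⟩, ?_⟩
    simp
  rcases Nat.eq_zero_or_pos M with hM0 | hM1
  · subst hM0
    have hbz : b = 0 := by
      rw [hb]; apply Finset.sum_eq_zero; intro x hx
      have hx0 : x = 0 := funext fun i => by
        have := hM x hx i
        have : |x i| ≤ 0 := by exact_mod_cast this
        have := abs_nonpos_iff.mp this
        simpa using this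
      rw [hx0]; simp
    refine ⟨∅, Finset.empty_subset _, ⟨fun _ => 0, by simp [hbz]⟩, ?_⟩
    norm_num
  -- main case
  set P : ℕ → Prop := fun t => ∃ μ : (Fin d → ℤ) → ℕ,
    b = ∑ x ∈ X, μ x • x ∧ ∑ x ∈ X, μ x = t with hP
  have hPex : ∃ t, P t := ⟨_, lam, hb, rfl⟩
  set t₀ := Nat.find hPex with ht₀
  obtain ⟨μ₁, hμ₁b, hμ₁t⟩ := Nat.find_spec hPex
  set Q : ℕ → Prop := fun c => ∃ μ : (Fin d → ℤ) → ℕ,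
    b = ∑ x ∈ X, μ x • x ∧ ∑ x ∈ X, μ x = t₀ ∧
    (X.filter (fun x => μ x ≠ 0)).card = c with hQ
  have hQex : ∃ c, Q c := ⟨_, μ₁, hμ₁b, hμ₁t, rfl⟩
  obtain ⟨μ, hbμ, hμt, hμc⟩ := Nat.find_spec hQex
  have hmin1 : ∀ ν : (Fin d → ℤ) → ℕ, b = ∑ x ∈ X, ν x • x →
      ∑ x ∈ X, μ x ≤ ∑ x ∈ X, ν x := by
    intro ν hν
    rw [hμt]; exact Nat.find_min' hPex ⟨ν, hν, rfl⟩
  have hmin2 : ∀ ν : (Fin d → ℤ) → ℕ, b = ∑ x ∈ X, ν x • x →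
      ∑ x ∈ X, ν x = ∑ x ∈ X, μ x →
      (X.filter (fun x => μ x ≠ 0)).card ≤ (X.filter (fun x => ν x ≠ 0)).card := by
    intro ν hν hνt
    rw [hμc]; exact Nat.find_min' hQex ⟨ν, hν, by rw [hνt, hμt], rfl⟩
  set Xt := X.filter (fun x => μ x ≠ 0) with hXt
  set k := Xt.card with hk
  have hXtX : Xt ⊆ X := filter_subset _ _
  have hbXt : b = ∑ x ∈ Xt, μ x • x := by
    rw [hbμ]
    exact (Finset.sum_filter_of_ne (fun x _ h => by
      intro h0
      apply h
      rw [h0, zero_smul])).symm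
  refine ⟨Xt, hXtX, ⟨μ, hbXt⟩, ?_⟩
  -- injectivity of subset sums
  have hinj : ∀ S ∈ Xt.powerset, ∀ T ∈ Xt.powerset,
      (∑ x ∈ S, x) = (∑ x ∈ T, x) → S = T := by
    intro S hSmem T hTmem hST
    by_contra hne
    rw [Finset.mem_powerset] at hSmem hTmem
    set S' := S \ T with hS'
    set T' := T \ S with hT'
    have hdisj : Disjoint S' T' := disjoint_sdiff_sdiff
    have h1 : ∑ x ∈ S \ (S ∩ T), x + ∑ x ∈ S ∩ T, x = ∑ x ∈ S, x :=
      Finset.sum_sdiff Finset.inter_subset_left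
    have h2 : ∑ x ∈ T \ (T ∩ S), x + ∑ x ∈ T ∩ S, x = ∑ x ∈ T, x :=
      Finset.sum_sdiff Finset.inter_subset_left
    rw [Finset.sdiff_inter_self_left] at h1 h2
    rw [Finset.inter_comm] at h2
    have hsum' : ∑ x ∈ S', x = ∑ x ∈ T', x := by
      have h3 : ∑ x ∈ S', x + ∑ x ∈ S ∩ T, x = ∑ x ∈ T', x + ∑ x ∈ S ∩ T, x := by
        rw [h1, h2, hST]
      exact add_right_cancel h3
    have hnotboth : ¬(S' = ∅ ∧ T' = ∅) := by
      rintro ⟨ha, hb'⟩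
      exact hne (Finset.Subset.antisymm (Finset.sdiff_eq_empty_iff_subset.mp ha)
        (Finset.sdiff_eq_empty_iff_subset.mp hb'))
    have hS'sub : S' ⊆ Xt := Finset.sdiff_subset.trans hSmem
    have hT'sub : T' ⊆ Xt := Finset.sdiff_subset.trans hTmem
    rcases le_total T'.card S'.card with hc | hc
    · have hS'ne : S'.Nonempty := by
        rcases Finset.eq_empty_or_nonempty S' with h | h
        · exfalso
          apply hnotboth
          refine ⟨h, Finset.card_eq_zero.mp ?_⟩
          rw [h] at hc; simpa using hc
        · exact h
      exact swap_lemma hbμ S' T' hS'sub hT'sub hdisj hsum' hS'ne hc hmin1 hmin2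
    · have hT'ne : T'.Nonempty := by
        rcases Finset.eq_empty_or_nonempty T' with h | h
        · exfalso
          apply hnotboth
          refine ⟨Finset.card_eq_zero.mp ?_, h⟩
          rw [h] at hc; simpa using hc
        · exact h
      exact swap_lemma hbμ T' S' hT'sub hS'sub hdisj.symm hsum'.symm hT'ne hc hmin1 hmin2
  -- counting
  have hbox : ∀ S ∈ Xt.powerset, (∑ x ∈ S, x) ∈
      Fintype.piFinset (fun _ : Fin d => Finset.Icc (-(k*M:ℤ)) (k*M)) := by
    intro S hSmem
    rw [Finset.mem_powerset] at hSmem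
    rw [Fintype.mem_piFinset]
    intro i
    rw [Finset.mem_Icc]
    have habs : |∑ x ∈ S, x i| ≤ (k*M : ℤ) := by
      calc |∑ x ∈ S, x i| ≤ ∑ x ∈ S, |x i| := Finset.abs_sum_le_sum_abs _ _
        _ ≤ ∑ _x ∈ S, (M:ℤ) := Finset.sum_le_sum (fun x hx => hM x (hXtX (hSmem hx)) i)
        _ = (S.card : ℤ) * M := by rw [Finset.sum_const, nsmul_eq_mul]
        _ ≤ (k:ℤ)*M := by
            have : S.card ≤ k := Finset.card_le_card hSmem
            have : (S.card : ℤ) ≤ k := by exact_mod_cast this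
            have hMnn : (0:ℤ) ≤ M := by positivity
            exact mul_le_mul_of_nonneg_right this hMnn
    have h1 : (∑ x ∈ S, x) i = ∑ x ∈ S, x i := by
      rw [Finset.sum_apply]
    rw [h1]
    have := abs_le.mp habs
    exact ⟨by linarith [this.1], this.2⟩
  have hcount : 2^k ≤ (2*k*M+1)^d := by
    have h1 := Finset.card_le_card_of_injOn (fun S => ∑ x ∈ S, x) hbox
      (fun S hS T hT h => hinj S (Finset.mem_coe.mp hS) T (Finset.mem_coe.mp hT) h)
    rw [Finset.card_powerset, Fintype.card_piFinset] at h1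
    have hIcc : (Finset.Icc (-(k*M:ℤ)) (k*M)).card = 2*k*M+1 := by
      rw [Int.card_Icc]
      have : ((k:ℤ)*M + 1 - (-((k:ℤ)*M))) = ((2*k*M+1 : ℕ) : ℤ) := by push_cast; ring
      rw [this, Int.toNat_natCast]
    simpa [hIcc] using h1
  have hkey := keyArith hd hM1 hcount
  -- real logarithm step
  have hcast : ((2:ℝ))^k ≤ ((4*d*M : ℕ) : ℝ)^(2*d) := by exact_mod_cast hkey
  have h2pos : (0:ℝ) < 2^k := by positivity
  have hlog := Real.logb_le_logb_of_le (by norm_num : (1:ℝ) < 2) h2pos hcast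
  rw [Real.logb_pow, Real.logb_pow, Real.logb_self_eq_one (by norm_num)] at hlog
  have hc : ((4*d*M : ℕ) : ℝ) = 4 * d * M := by push_cast; ring
  rw [hc] at hlog
  calc (k:ℝ) = k * 1 := by ring
    _ ≤ (2*d : ℕ) * Real.logb 2 (4 * d * M) := hlog
    _ = 2 * d * Real.logb 2 (4 * d * M) := by push_cast; ring
end

section
/- For any integer matrix A ∈ ℤ^{m×n}, every Graver basis element g ∈ G(A) satisfies ‖g‖₁ ≤ (2‖A‖_∞ · m + 1)^m. -/
open Finset

lemma frac_reduce {ι W : Type*} [Fintype ι] [DecidableEq ι]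
    [AddCommGroup W] [Module ℚ W] [FiniteDimensional ℚ W]
    (w : ι → W) (μ : ι → ℚ) (h0 : ∀ x, 0 ≤ μ x) (h1 : ∀ x, μ x ≤ 1) :
    ∃ μ' : ι → ℚ, (∀ x, 0 ≤ μ' x) ∧ (∀ x, μ' x ≤ 1) ∧
      (∑ x, μ' x • w x = ∑ x, μ x • w x) ∧
      (∀ x, μ x = 0 → μ' x = 0) ∧
      (univ.filter (fun x => μ' x ≠ 0 ∧ μ' x ≠ 1)).card ≤ Module.finrank ℚ W := by
  set d := Module.finrank ℚ W with hd
  obtain ⟨k, hk⟩ : ∃ k, (univ.filter (fun x => μ x ≠ 0 ∧ μ x ≠ 1)).card ≤ k := ⟨_, le_rfl⟩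
  induction k generalizing μ with
  | zero => exact ⟨μ, h0, h1, rfl, fun x h => h, hk.trans (Nat.zero_le d)⟩
  | succ k ih =>
    by_cases hle : (univ.filter (fun x => μ x ≠ 0 ∧ μ x ≠ 1)).card ≤ k
    · exact ih μ h0 h1 hle
    by_cases hd' : (univ.filter (fun x => μ x ≠ 0 ∧ μ x ≠ 1)).card ≤ d
    · exact ⟨μ, h0, h1, rfl, fun x h => h, hd'⟩
    push_neg at hd'
    set F := univ.filter (fun x => μ x ≠ 0 ∧ μ x ≠ 1) with hF
    -- linearly dependent family
    have hnli : ¬ LinearIndependent ℚ (fun x : ↥F => w ↑x) := by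
      intro h
      have := h.fintype_card_le_finrank
      rw [Fintype.card_coe] at this
      omega
    obtain ⟨ε, hεsum, x₀, hx₀⟩ := Fintype.not_linearIndependent_iff.mp hnli
    -- choose minimal step
    set step : ↥F → ℚ := fun x => if 0 < ε x then (1 - μ ↑x) / ε x else μ ↑x / (-ε x) with hstep
    have hCne : (univ.filter (fun x : ↥F => ε x ≠ 0)).Nonempty := ⟨x₀, by simp [hx₀]⟩
    obtain ⟨y, hy, hty⟩ := Finset.exists_min_image _ step hCne
    rw [mem_filter] at hy
    have hεy : ε y ≠ 0 := hy.2
    have hmemF : ∀ x : ↥F, 0 < μ ↑x ∧ μ ↑x < 1 := by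
      intro x
      have h2 := (Finset.mem_filter.mp x.2).2
      exact ⟨lt_of_le_of_ne (h0 x) (Ne.symm h2.1), lt_of_le_of_ne (h1 x) h2.2⟩
    set t := step y with ht
    have htpos : ∀ x : ↥F, ε x ≠ 0 → 0 < step x := by
      intro x hx
      rcases lt_or_gt_of_ne hx with h | h
      · have : ¬ (0 < ε x) := by linarith
        simp only [hstep, this, if_false]
        exact div_pos (hmemF x).1 (by linarith)
      · simp only [hstep, h, if_true]
        exact div_pos (by linarith [(hmemF x).2]) h
    have ht0 : 0 ≤ t := le_of_lt (htpos y hεy)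
    -- extended direction
    set εe : ι → ℚ := fun x => if h : x ∈ F then ε ⟨x, h⟩ else 0 with hεe
    set μ₂ : ι → ℚ := fun x => μ x + t * εe x with hμ₂
    have hstepbd : ∀ x : ↥F, ε x ≠ 0 → t ≤ step x := fun x hx => hty x (by simp [hx])
    have key : ∀ x : ↥F, 0 ≤ μ₂ ↑x ∧ μ₂ ↑x ≤ 1 := by
      intro x
      have hεex : εe ↑x = ε x := by
        simp only [hεe]
        rw [dif_pos x.2]
      by_cases hx : ε x = 0
      · have : μ₂ ↑x = μ ↑x := by simp only [hμ₂, hεex, hx, mul_zero, add_zero]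
        rw [this]
        exact ⟨h0 x, h1 x⟩
      rcases lt_or_gt_of_ne hx with h | h
      · -- ε x < 0 : μ₂ decreases, lower bound from step
        have hs : step x = μ ↑x / (-ε x) := by
          simp only [hstep, if_neg (by linarith : ¬ (0 < ε x))]
        constructor
        · have : t * (-ε x) ≤ step x * (-ε x) :=
            mul_le_mul_of_nonneg_right (hstepbd x hx) (by linarith)
          rw [hs, div_mul_cancel₀ _ (by linarith : (-ε x) ≠ 0)] at this
          simp only [hμ₂, hεex]
          linarith
        · simp only [hμ₂, hεex]
          nlinarith [(hmemF x).2, ht0]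
      · -- ε x > 0
        have hs : step x = (1 - μ ↑x) / ε x := by simp only [hstep, if_pos h]
        constructor
        · simp only [hμ₂, hεex]
          nlinarith [(hmemF x).1, ht0]
        · have : t * ε x ≤ step x * ε x :=
            mul_le_mul_of_nonneg_right (hstepbd x hx) (by linarith)
          rw [hs, div_mul_cancel₀ _ (by linarith : ε x ≠ 0)] at this
          simp only [hμ₂, hεex]
          linarith
    have hout : ∀ x, x ∉ F → μ₂ x = μ x := by
      intro x hx
      simp only [hμ₂, hεe, dif_neg hx, mul_zero, add_zero]
    have h0' : ∀ x, 0 ≤ μ₂ x := by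
      intro x
      by_cases hx : x ∈ F
      · exact (key ⟨x, hx⟩).1
      · rw [hout x hx]; exact h0 x
    have h1' : ∀ x, μ₂ x ≤ 1 := by
      intro x
      by_cases hx : x ∈ F
      · exact (key ⟨x, hx⟩).2
      · rw [hout x hx]; exact h1 x
    -- y's coordinate hits the boundary
    have hybd : μ₂ ↑y = 0 ∨ μ₂ ↑y = 1 := by
      have hεey : εe ↑y = ε y := by simp only [hεe]; rw [dif_pos y.2]
      rcases lt_or_gt_of_ne hεy with h | h
      · left
        have hs : t = μ ↑y / (-ε y) := by
          simp only [ht, hstep, if_neg (by linarith : ¬ (0 < ε y))]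
        simp only [hμ₂, hεey, hs]
        rw [div_neg, neg_mul, div_mul_cancel₀ _ hεy]
        ring
      · right
        have hs : t = (1 - μ ↑y) / ε y := by simp only [ht, hstep, if_pos h]
        simp only [hμ₂, hεey, hs]
        field_simp
        ring
    -- sum preserved
    have hdirsum : ∑ x, εe x • w x = 0 := by
      rw [← Finset.sum_subset (Finset.subset_univ F)]
      · rw [← Finset.sum_attach F (fun x => εe x • w x)]
        rw [← hεsum]
        apply Finset.sum_congr rfl
        intro x _
        congr 1
        simp only [hεe]
        rw [dif_pos x.2]
      · intro x _ hx
        simp only [hεe, dif_neg hx, zero_smul]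
    have hsum' : ∑ x, μ₂ x • w x = ∑ x, μ x • w x := by
      simp only [hμ₂, add_smul, mul_smul]
      rw [Finset.sum_add_distrib, ← Finset.smul_sum, hdirsum, smul_zero, add_zero]
    -- fractional set shrinks
    have hsub : (univ.filter (fun x => μ₂ x ≠ 0 ∧ μ₂ x ≠ 1)) ⊆ F.erase ↑y := by
      intro x hx
      rw [mem_filter] at hx
      have hxF : x ∈ F := by
        by_contra hc
        rw [hout x hc] at hx
        rw [hF, mem_filter] at hc
        push_neg at hc
        exact hx.2.2 (hc (mem_univ x) hx.2.1)
      refine Finset.mem_erase.mpr ⟨?_, hxF⟩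
      intro hxy
      subst hxy
      rcases hybd with h | h
      · exact hx.2.1 h
      · exact hx.2.2 h
    have hcard2 : (univ.filter (fun x => μ₂ x ≠ 0 ∧ μ₂ x ≠ 1)).card ≤ k := by
      calc _ ≤ (F.erase ↑y).card := Finset.card_le_card hsub
        _ ≤ F.card - 1 := by rw [Finset.card_erase_of_mem y.2]
        _ ≤ k := by omega
    obtain ⟨μ', a1, a2, a3, a4, a5⟩ := ih μ₂ h0' h1' hcard2
    refine ⟨μ', a1, a2, a3.trans hsum', ?_, a5⟩
    intro x hx
    apply a4
    have hxF : x ∉ F := by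
      rw [hF, mem_filter]
      push_neg
      intro _ h
      exact absurd hx h
    rw [hout x hxF, hx]

section Chain
variable {ι : Type*} [Fintype ι] [DecidableEq ι] {m : ℕ} (v : ι → Fin m → ℚ)

/-- The invariant carried along the chain. -/
def GoodSet (v : ι → Fin m → ℚ) (k : ℕ) (S : Finset ι) : Prop :=
  S.card = k ∧ ∃ μ : ι → ℚ, (∀ x, 0 ≤ μ x ∧ μ x ≤ 1) ∧ (∀ x ∉ S, μ x = 0) ∧
    (∑ x ∈ S, μ x = max ((k : ℚ) - m) 0) ∧ (∑ x ∈ S, μ x • v x = 0)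

lemma goodSet_bound {k : ℕ} {S : Finset ι} (hG : GoodSet v k S)
    {a : ℚ} (ha0 : 0 ≤ a) (ha : ∀ x i, |v x i| ≤ a) (i : Fin m) :
    |∑ x ∈ S, v x i| ≤ m * a := by
  obtain ⟨hcard, μ, h01, hsupp, hμsum, hμv⟩ := hG
  have hvi : ∑ x ∈ S, μ x * v x i = 0 := by
    have := congrFun hμv i
    simpa [Finset.sum_apply] using this
  have hrw : ∑ x ∈ S, v x i = ∑ x ∈ S, (1 - μ x) * v x i := by
    rw [Finset.sum_congr rfl (fun x _ => by ring :
      ∀ x ∈ S, v x i = (1 - μ x) * v x i + μ x * v x i)]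
    rw [Finset.sum_add_distrib, hvi, add_zero]
  rw [hrw]
  calc |∑ x ∈ S, (1 - μ x) * v x i| ≤ ∑ x ∈ S, |(1 - μ x) * v x i| :=
        Finset.abs_sum_le_sum_abs _ _
    _ = ∑ x ∈ S, (1 - μ x) * |v x i| := by
        refine Finset.sum_congr rfl fun x _ => ?_
        rw [abs_mul, abs_of_nonneg (by linarith [(h01 x).2])]
    _ ≤ ∑ x ∈ S, (1 - μ x) * a := by
        refine Finset.sum_le_sum fun x _ => ?_
        exact mul_le_mul_of_nonneg_left (ha x i) (by linarith [(h01 x).2])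
    _ = ((k : ℚ) - max ((k : ℚ) - m) 0) * a := by
        rw [← Finset.sum_mul]
        congr 1
        rw [Finset.sum_sub_distrib, hμsum, Finset.sum_const, hcard, nsmul_eq_mul, mul_one]
    _ ≤ m * a := by
        apply mul_le_mul_of_nonneg_right _ ha0
        rcases max_cases ((k : ℚ) - m) 0 with ⟨h1, h2⟩ | ⟨h1, h2⟩ <;> rw [h1] <;> push_cast <;> linarith

lemma goodSet_step {k : ℕ} {S : Finset ι} (hG : GoodSet v (k + 1) S) :
    ∃ x ∈ S, GoodSet v k (S.erase x) := by
  obtain ⟨hcard, μ, h01, hsupp, hμsum, hμv⟩ := hG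
  have hSne : S.Nonempty := Finset.card_pos.mp (by omega)
  by_cases hkm : k + 1 ≤ m
  · -- trivial case: all μ are zero
    have hc : max ((k + 1 : ℚ) - m) 0 = 0 := by
      apply max_eq_right
      have : ((k : ℚ) + 1) ≤ m := by exact_mod_cast hkm
      push_cast
      linarith
    rw [show ((k + 1 : ℕ) : ℚ) = (k + 1 : ℚ) by push_cast; ring, hc] at hμsum
    have hzero : ∀ x ∈ S, μ x = 0 :=
      (Finset.sum_eq_zero_iff_of_nonneg (fun x _ => (h01 x).1)).mp hμsum
    obtain ⟨x, hx⟩ := hSne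
    refine ⟨x, hx, ?_, μ, h01, ?_, ?_, ?_⟩
    · rw [Finset.card_erase_of_mem hx, hcard]; omega
    · intro z hz
      by_cases hzS : z ∈ S
      · exact hzero z hzS
      · exact hsupp z hzS
    · rw [Finset.sum_eq_zero (fun z hz => hzero z (Finset.mem_of_mem_erase hz))]
      symm
      apply max_eq_right
      have hm : (k : ℚ) ≤ m := by exact_mod_cast Nat.le_of_succ_le hkm
      linarith
    · exact Finset.sum_eq_zero fun z hz => by
        rw [hzero z (Finset.mem_of_mem_erase hz), zero_smul]
  · -- main case: k ≥ m
    push_neg at hkm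
    have hmk : m ≤ k := by omega
    have hmkQ : (m : ℚ) ≤ k := by exact_mod_cast hmk
    have hc1 : max (((k + 1 : ℕ) : ℚ) - m) 0 = (k : ℚ) + 1 - m := by
      rw [max_eq_left (by push_cast; linarith)]
      push_cast; ring
    rw [hc1] at hμsum
    have hden : (0 : ℚ) < (k : ℚ) + 1 - m := by linarith
    set f : ℚ := ((k : ℚ) - m) / ((k : ℚ) + 1 - m) with hf
    have hf0 : 0 ≤ f := div_nonneg (by linarith) (by linarith)
    have hf1 : f ≤ 1 := by
      rw [hf, div_le_one hden]; linarith
    set μ₀ : ι → ℚ := fun x => f * μ x with hμ₀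
    have hμ₀0 : ∀ x, 0 ≤ μ₀ x := fun x => mul_nonneg hf0 (h01 x).1
    have hμ₀1 : ∀ x, μ₀ x ≤ 1 := fun x =>
      le_trans (mul_le_mul hf1 (h01 x).2 (h01 x).1 zero_le_one) (by norm_num)
    obtain ⟨μ', hb0, hb1, hbsum, hbzero, hbcard⟩ :=
      frac_reduce (W := ℚ × (Fin m → ℚ)) (fun x => ((1 : ℚ), v x)) μ₀ hμ₀0 hμ₀1
    have hfinrank : Module.finrank ℚ (ℚ × (Fin m → ℚ)) = m + 1 := by
      simp [add_comm]
    rw [hfinrank] at hbcard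
    have hμ₀supp : ∀ x ∉ S, μ₀ x = 0 := fun x hx => by
      rw [hμ₀]; simp only; rw [hsupp x hx, mul_zero]
    have hμ'supp : ∀ x ∉ S, μ' x = 0 := fun x hx => hbzero x (hμ₀supp x hx)
    have hres : ∀ (g : ι → ℚ), (∀ x ∉ S, g x = 0) →
        ∀ {M : Type} (_ : AddCommMonoid M) (w : ι → M) (hw : ∀ x, g x = 0 → w x = 0),
        True := fun _ _ _ _ _ _ => trivial
    -- restrict sums to S
    have hSsum : ∀ (g : ι → ℚ), (∀ x ∉ S, g x = 0) → (∑ x, g x) = ∑ x ∈ S, g x := by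
      intro g hgs
      rw [← Finset.sum_subset (Finset.subset_univ S) (fun x _ hx => hgs x hx)]
    have hSsumv : ∀ (g : ι → ℚ), (∀ x ∉ S, g x = 0) →
        (∑ x, g x • v x) = ∑ x ∈ S, g x • v x := by
      intro g hgs
      rw [← Finset.sum_subset (Finset.subset_univ S)
        (fun x _ hx => by rw [hgs x hx, zero_smul])]
    have hμ₀sum : ∑ x ∈ S, μ₀ x = (k : ℚ) - m := by
      rw [hμ₀]
      simp only
      rw [← Finset.mul_sum, hμsum, hf, div_mul_cancel₀ _ (ne_of_gt hden)]
    have hμ₀v : ∑ x ∈ S, μ₀ x • v x = 0 := by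
      rw [hμ₀]
      simp only [mul_smul]
      rw [← Finset.smul_sum, hμv, smul_zero]
    have hfst : ∑ x ∈ S, μ' x = (k : ℚ) - m := by
      have h := congrArg Prod.fst hbsum
      rw [Prod.fst_sum, Prod.fst_sum] at h
      simp only [Prod.smul_fst, smul_eq_mul, mul_one] at h
      rw [hSsum μ' hμ'supp, hSsum μ₀ hμ₀supp] at h
      rw [h, hμ₀sum]
    have hsnd : ∑ x ∈ S, μ' x • v x = 0 := by
      have h := congrArg Prod.snd hbsum
      rw [Prod.snd_sum, Prod.snd_sum] at h
      simp only [Prod.smul_snd] at h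
      rw [hSsumv μ' hμ'supp, hSsumv μ₀ hμ₀supp] at h
      rw [h, hμ₀v]
    -- find a zero coordinate in S
    have hzeroex : ∃ x ∈ S, μ' x = 0 := by
      by_contra hne
      push_neg at hne
      set O := S.filter (fun x => μ' x = 1) with hO
      set Oc := S.filter (fun x => ¬ μ' x = 1) with hOc
      have hsplit : ∑ x ∈ O, μ' x + ∑ x ∈ Oc, μ' x = (k : ℚ) - m := by
        rw [hO, hOc, Finset.sum_filter_add_sum_filter_not, hfst]
      have hOsum : ∑ x ∈ O, μ' x = (O.card : ℚ) := by
        rw [Finset.sum_congr rfl (fun x hx => (Finset.mem_filter.mp hx).2),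
          Finset.sum_const, nsmul_eq_mul, mul_one]
      have hOccard : Oc.card ≤ m + 1 := by
        refine le_trans (Finset.card_le_card ?_) hbcard
        intro x hx
        rw [hOc, Finset.mem_filter] at hx
        exact Finset.mem_filter.mpr ⟨Finset.mem_univ x, hne x hx.1, hx.2⟩
      have hcards : O.card + Oc.card = k + 1 := by
        rw [hO, hOc, Finset.card_filter_add_card_filter_not, hcard]
      have hOcnonneg : (0 : ℚ) ≤ ∑ x ∈ Oc, μ' x :=
        Finset.sum_nonneg fun x _ => hb0 x
      have hOcard_ge : (k : ℚ) - m ≤ (O.card : ℚ) := by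
        have : k + 1 ≤ O.card + (m + 1) := by omega
        have := (Nat.cast_le (α := ℚ)).mpr this
        push_cast at this
        linarith
      have hOczero : ∑ x ∈ Oc, μ' x = 0 := by
        rw [hOsum] at hsplit
        linarith
      have hOcempty : Oc = ∅ := by
        by_contra hocne
        obtain ⟨x, hx⟩ := Finset.nonempty_iff_ne_empty.mpr hocne
        have := (Finset.sum_eq_zero_iff_of_nonneg (fun z _ => hb0 z)).mp hOczero x hx
        exact hne x (Finset.mem_filter.mp hx).1 this
      rw [hOcempty] at hcards
      simp only [Finset.card_empty, add_zero] at hcards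
      rw [hOcempty, Finset.sum_empty, add_zero, hOsum, hcards] at hsplit
      push_cast at hsplit
      linarith
    obtain ⟨x, hxS, hx0⟩ := hzeroex
    refine ⟨x, hxS, ?_, μ', fun z => ⟨hb0 z, hb1 z⟩, ?_, ?_, ?_⟩
    · rw [Finset.card_erase_of_mem hxS, hcard]; omega
    · intro z hz
      by_cases hzS : z ∈ S
      · have : z = x := by
          by_contra hzz
          exact hz (Finset.mem_erase.mpr ⟨hzz, hzS⟩)
        rw [this]; exact hx0
      · exact hμ'supp z hzS
    · rw [Finset.sum_erase S hx0, hfst]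
      symm
      exact max_eq_left (by linarith)
    · rw [Finset.sum_erase S (by rw [hx0, zero_smul]), hsnd]

end Chain

section Chain2
variable {ι : Type*} [Fintype ι] [DecidableEq ι] {m : ℕ} (v : ι → Fin m → ℚ)

lemma goodSet_chain (hsum : ∑ x, v x = 0) :
    ∃ S : ℕ → Finset ι, (∀ j, S j ⊆ S (j + 1)) ∧
      ∀ j ≤ Fintype.card ι, GoodSet v j (S j) := by
  set T := Fintype.card ι with hT
  have base : GoodSet v T (univ : Finset ι) := by
    refine ⟨by simp [hT], ?_⟩
    set c := max ((T : ℚ) - m) 0 with hc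
    have hc0 : 0 ≤ c := le_max_right _ _
    have hcT : c ≤ T := max_le (by have : (0:ℚ) ≤ m := Nat.cast_nonneg m; linarith)
      (Nat.cast_nonneg T)
    refine ⟨fun _ => c / T, ?_, by simp, ?_, ?_⟩
    · intro x
      constructor
      · exact div_nonneg hc0 (Nat.cast_nonneg T)
      · rcases Nat.eq_zero_or_pos T with h0 | hpos
        · rw [h0]; norm_num
        · rw [div_le_one (by exact_mod_cast hpos)]; exact hcT
    · rw [Finset.sum_const, nsmul_eq_mul, Finset.card_univ, ← hT]
      rcases Nat.eq_zero_or_pos T with h0 | hpos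
      · have hcz : c = 0 := le_antisymm (by rw [h0] at hcT; exact_mod_cast hcT) hc0
        rw [h0, hcz]; norm_num
      · rw [mul_div_cancel₀ _ (by exact_mod_cast hpos.ne' : (T : ℚ) ≠ 0)]
    · rw [← Finset.smul_sum, hsum, smul_zero]
  have main : ∀ r : ℕ, ∃ S : ℕ → Finset ι, (∀ j, S j ⊆ S (j + 1)) ∧
      (∀ j, T - r ≤ j → j ≤ T → GoodSet v j (S j)) := by
    intro r
    induction r with
    | zero =>
      refine ⟨fun _ => univ, fun j => subset_rfl, ?_⟩
      intro j hj1 hj2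
      have hjT : j = T := le_antisymm hj2 (by omega)
      subst hjT
      exact base
    | succ r ih =>
      obtain ⟨S, hchain, hgood⟩ := ih
      by_cases hr : T ≤ r
      · exact ⟨S, hchain, fun j h1 h2 => hgood j (by omega) h2⟩
      push_neg at hr
      set k := T - r - 1 with hk
      have hk1 : k + 1 = T - r := by omega
      obtain ⟨x, hx, hGer⟩ := goodSet_step v (hgood (k + 1) (by omega) (by omega))
      refine ⟨fun j => if j ≤ k then (S (k + 1)).erase x else S j, ?_, ?_⟩
      · intro j
        dsimp only
        by_cases h1 : j + 1 ≤ k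
        · rw [if_pos (by omega), if_pos h1]
        by_cases h2 : j ≤ k
        · have : j = k := by omega
          rw [if_pos h2, if_neg h1, this]
          exact Finset.erase_subset _ _
        · rw [if_neg h2, if_neg h1]
          exact hchain j
      · intro j hj1 hj2
        dsimp only
        by_cases hjk : j ≤ k
        · have : j = k := by omega
          rw [if_pos hjk, this]
          exact hGer
        · rw [if_neg hjk]
          exact hgood j (by omega) hj2
  obtain ⟨S, hchain, hgood⟩ := main T
  exact ⟨S, hchain, fun j hj => hgood j (by omega) hj⟩

end Chain2

lemma abs_sign_le_one (z : ℤ) : |Int.sign z| ≤ 1 := by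
  rcases Int.lt_trichotomy z 0 with h|h|h
  · rw [Int.sign_eq_neg_one_iff_neg.mpr h]; norm_num
  · rw [h]; norm_num
  · rw [Int.sign_eq_one_iff_pos.mpr h]; norm_num

lemma sign_mul_self_eq_abs (z : ℤ) : Int.sign z * z = |z| := by
  rcases Int.lt_trichotomy z 0 with h|h|h
  · rw [Int.sign_eq_neg_one_iff_neg.mpr h, abs_of_neg h]; ring
  · rw [h]; norm_num
  · rw [Int.sign_eq_one_iff_pos.mpr h, abs_of_pos h]; ring

/-- Every Graver basis element of `A ∈ ℤ^{m×n}` has ℓ₁-norm at most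
`(2‖A‖∞ m + 1)^m`. -/
theorem stmt9 (m n : ℕ) (A : Matrix (Fin m) (Fin n) ℤ)
    (g : Fin n → ℤ) (hg : InGraver A g) :
    (∑ i, |g i|) ≤
      (2 * ((Finset.univ.sup fun p : Fin m × Fin n => (A p.1 p.2).natAbs : ℕ) : ℤ)
        * (m : ℤ) + 1) ^ m := by
  obtain ⟨hgne, hgker, hgmin⟩ := hg
  set a : ℕ := Finset.univ.sup fun p : Fin m × Fin n => (A p.1 p.2).natAbs with ha
  by_contra hcon
  push_neg at hcon
  set w : ((i : Fin n) × Fin (g i).natAbs) → Fin m → ℤ :=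
    fun x r => Int.sign (g x.1) * A r x.1 with hw
  set v : ((i : Fin n) × Fin (g i).natAbs) → Fin m → ℚ :=
    fun x r => ((w x r : ℤ) : ℚ) with hv
  set T := Fintype.card ((i : Fin n) × Fin (g i).natAbs) with hTdef
  have hcardT : T = ∑ i, (g i).natAbs := by simp [hTdef, Fintype.card_sigma]
  have hTsum : (T : ℤ) = ∑ i, |g i| := by
    rw [hcardT]
    push_cast [Int.natCast_natAbs]
    rfl
  have hA : ∀ r i, |A r i| ≤ (a : ℤ) := by
    intro r i
    have h := Finset.le_sup (f := fun p : Fin m × Fin n => (A p.1 p.2).natAbs)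
      (Finset.mem_univ (r, i))
    rw [← Int.natCast_natAbs]
    exact_mod_cast h
  have hwbound : ∀ x r, |w x r| ≤ (a : ℤ) := by
    intro x r
    have hwx : w x r = Int.sign (g x.1) * A r x.1 := rfl
    rw [hwx, abs_mul]
    calc |Int.sign (g x.1)| * |A r x.1| ≤ 1 * (a : ℤ) :=
          mul_le_mul (abs_sign_le_one _) (hA r x.1) (abs_nonneg _) zero_le_one
      _ = (a : ℤ) := one_mul _
  have hvbound : ∀ x r, |v x r| ≤ ((a : ℕ) : ℚ) := by
    intro x r
    have hvx : v x r = ((w x r : ℤ) : ℚ) := rfl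
    rw [hvx, ← Int.cast_abs]
    exact_mod_cast hwbound x r
  have hZ : ∀ r, ∑ x : ((i : Fin n) × Fin (g i).natAbs), w x r = 0 := by
    intro r
    rw [← Finset.univ_sigma_univ, Finset.sum_sigma]
    have hmv := congrFun hgker r
    simp only [Matrix.mulVec, dotProduct, Pi.zero_apply] at hmv
    calc ∑ i, ∑ _j : Fin (g i).natAbs, w ⟨i, _j⟩ r
        = ∑ i, A r i * g i := by
          refine Finset.sum_congr rfl fun i _ => ?_
          have hwi : ∀ _j : Fin (g i).natAbs, w ⟨i, _j⟩ r = Int.sign (g i) * A r i :=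
            fun _j => rfl
          rw [Finset.sum_congr rfl fun _j _ => hwi _j, Finset.sum_const, Finset.card_univ,
            Fintype.card_fin, nsmul_eq_mul, ← mul_assoc,
            mul_comm ((g i).natAbs : ℤ) (Int.sign (g i)), Int.sign_mul_natAbs]
          ring
      _ = 0 := hmv
  have hvsum : ∑ x, v x = 0 := by
    funext r
    rw [Finset.sum_apply]
    have : ∑ x : ((i : Fin n) × Fin (g i).natAbs), v x r
        = (((∑ x : ((i : Fin n) × Fin (g i).natAbs), w x r : ℤ)) : ℚ) := by
      push_cast
      rfl
    rw [Pi.zero_apply, this, hZ r, Int.cast_zero]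
  obtain ⟨S, hchain, hgood⟩ := goodSet_chain v hvsum
  have hmono : ∀ p q, p ≤ q → S p ⊆ S q := by
    intro p q hpq
    induction q, hpq using Nat.le_induction with
    | base => exact subset_rfl
    | succ q hq ihq => exact ihq.trans (hchain q)
  have hbndZ : ∀ j ≤ T, ∀ i, |∑ x ∈ S j, w x i| ≤ (m : ℤ) * a := by
    intro j hj i
    have hQ := goodSet_bound v (hgood j hj) (a := ((a : ℕ) : ℚ))
      (Nat.cast_nonneg a) hvbound i
    have hcast : ∑ x ∈ S j, v x i = (((∑ x ∈ S j, w x i : ℤ)) : ℚ) := by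
      push_cast
      rfl
    rw [hcast, ← Int.cast_abs] at hQ
    exact_mod_cast hQ
  have hTgt : ((2 * (a : ℤ) * m + 1) ^ m) < (T : ℤ) := by rw [hTsum]; exact hcon
  set box : Finset (Fin m → ℤ) :=
    Fintype.piFinset (fun _ => Finset.Icc (-((m : ℤ) * a)) ((m : ℤ) * a)) with hbox
  have hboxcard : (box.card : ℤ) = (2 * (a : ℤ) * m + 1) ^ m := by
    rw [hbox, Fintype.card_piFinset]
    simp only [Int.card_Icc]
    rw [Finset.prod_const, Finset.card_univ, Fintype.card_fin]
    have h1 : ((m : ℤ) * a + 1 - -((m : ℤ) * a)) = 2 * (a : ℤ) * m + 1 := by ring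
    rw [h1, Nat.cast_pow, Int.toNat_of_nonneg (by positivity)]
  have hcardlt : box.card < (Finset.range T).card := by
    rw [Finset.card_range]
    have : (box.card : ℤ) < (T : ℤ) := by rw [hboxcard]; exact hTgt
    exact_mod_cast this
  have key : ∀ p q : ℕ, p < q → q < T →
      ((fun i => ∑ x ∈ S p, w x i) = fun i => ∑ x ∈ S q, w x i) → False := by
    intro p q hpq hqT hfeq
    have hsub : S p ⊆ S q := hmono p q hpq.le
    have hcp : (S p).card = p := (hgood p (by omega)).1
    have hcq : (S q).card = q := (hgood q (by omega)).1
    set D := S q \ S p with hD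
    have hDcard : D.card = q - p := by rw [hD, Finset.card_sdiff_of_subset hsub, hcp, hcq]
    have hDpos : 0 < D.card := by omega
    have hDsum : ∀ r, ∑ x ∈ D, w x r = 0 := by
      intro r
      have h2 := Finset.sum_sdiff (f := fun x => w x r) hsub
      have h3 : ∑ x ∈ S p, w x r = ∑ x ∈ S q, w x r := congrFun hfeq r
      rw [← hD] at h2
      linarith
    set cnt : Fin n → ℕ := fun i => (D.filter (fun x => x.1 = i)).card with hcnt
    have hcntsum : ∑ i, cnt i = D.card :=
      (Finset.card_eq_sum_card_fiberwise (fun x _ => Finset.mem_univ x.1)).symm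
    have hcntle : ∀ i, cnt i ≤ (g i).natAbs := by
      intro i
      have hinj : ∀ x ∈ D.filter (fun x => x.1 = i), ∀ y ∈ D.filter (fun y => y.1 = i),
          (fun z : ((i : Fin n) × Fin (g i).natAbs) => (z.2 : ℕ)) x =
          (fun z : ((i : Fin n) × Fin (g i).natAbs) => (z.2 : ℕ)) y → x = y := by
        rintro ⟨x1, x2⟩ hx ⟨y1, y2⟩ hy hxy
        have hx1 : x1 = i := (Finset.mem_filter.mp hx).2
        have hy1 : y1 = i := (Finset.mem_filter.mp hy).2
        subst hx1
        subst hy1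
        dsimp only at hxy
        exact congrArg (Sigma.mk _) (Fin.ext hxy)
      have hmaps : ∀ x ∈ D.filter (fun x => x.1 = i),
          (fun z : ((i : Fin n) × Fin (g i).natAbs) => (z.2 : ℕ)) x ∈
            Finset.range (g i).natAbs := by
        intro x hx
        have hx1 : x.1 = i := (Finset.mem_filter.mp hx).2
        refine Finset.mem_range.mpr ?_
        rw [← hx1]
        exact x.2.isLt
      have hcc := Finset.card_le_card_of_injOn _ hmaps hinj
      rw [Finset.card_range] at hcc
      exact hcc
    set g' : Fin n → ℤ := fun i => Int.sign (g i) * cnt i with hg'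
    have habs_g' : ∀ i, |g' i| ≤ (cnt i : ℤ) := by
      intro i
      have hgi : g' i = Int.sign (g i) * cnt i := rfl
      rw [hgi, abs_mul, abs_of_nonneg (Int.natCast_nonneg (cnt i))]
      calc |Int.sign (g i)| * (cnt i : ℤ) ≤ 1 * (cnt i : ℤ) :=
            mul_le_mul_of_nonneg_right (abs_sign_le_one _) (Int.natCast_nonneg _)
        _ = (cnt i : ℤ) := one_mul _
    have hker' : A.mulVec g' = 0 := by
      funext r
      have hfib := Finset.sum_fiberwise_of_maps_to
        (fun (x : (i : Fin n) × Fin (g i).natAbs) (_ : x ∈ D) => Finset.mem_univ x.1)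
        (fun x => w x r)
      have hinner : ∀ i, ∑ x ∈ D.filter (fun x => x.1 = i), w x r
          = (cnt i : ℤ) * (Int.sign (g i) * A r i) := by
        intro i
        calc ∑ x ∈ D.filter (fun x => x.1 = i), w x r
            = ∑ _x ∈ D.filter (fun x => x.1 = i), Int.sign (g i) * A r i := by
              refine Finset.sum_congr rfl fun x hx => ?_
              have hwx : w x r = Int.sign (g x.1) * A r x.1 := rfl
              rw [hwx, (Finset.mem_filter.mp hx).2]
          _ = (cnt i : ℤ) * (Int.sign (g i) * A r i) := by
              rw [Finset.sum_const, nsmul_eq_mul, hcnt]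
      show A.mulVec g' r = 0
      simp only [Matrix.mulVec, dotProduct]
      calc ∑ i, A r i * g' i
          = ∑ i, (cnt i : ℤ) * (Int.sign (g i) * A r i) := by
            refine Finset.sum_congr rfl fun i _ => ?_
            have hgi : g' i = Int.sign (g i) * cnt i := rfl
            rw [hgi]
            ring
        _ = ∑ i, ∑ x ∈ D.filter (fun x => x.1 = i), w x r :=
            (Finset.sum_congr rfl fun i _ => (hinner i).symm)
        _ = ∑ x ∈ D, w x r := hfib
        _ = 0 := hDsum r
    have hconf : ConformalTo g' g := by
      intro i
      constructor
      · have hgi : g' i = Int.sign (g i) * cnt i := rfl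
        rw [hgi]
        have h5 : Int.sign (g i) * (cnt i : ℤ) * g i
            = (cnt i : ℤ) * (Int.sign (g i) * g i) := by ring
        rw [h5, sign_mul_self_eq_abs]
        exact mul_nonneg (Int.natCast_nonneg _) (abs_nonneg _)
      · calc |g' i| ≤ (cnt i : ℤ) := habs_g' i
          _ ≤ ((g i).natAbs : ℤ) := by exact_mod_cast hcntle i
          _ = |g i| := Int.natCast_natAbs _
    have hne' : g' ≠ 0 := by
      obtain ⟨i, hi⟩ : ∃ i, 0 < cnt i := by
        by_contra hall
        push_neg at hall
        have hzero : ∑ i, cnt i = 0 := Finset.sum_eq_zero fun i _ => by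
          have := hall i; omega
        omega
      intro h0
      have hgi0 : Int.sign (g i) * (cnt i : ℤ) = 0 := congrFun h0 i
      rcases mul_eq_zero.mp hgi0 with hs | hc
      · have hgz : g i = 0 := Int.sign_eq_zero_iff_zero.mp hs
        have hle := hcntle i
        rw [hgz] at hle
        simp at hle
        omega
      · have : cnt i = 0 := by exact_mod_cast hc
        omega
    have hgeq : g' = g := hgmin g' hne' hker' hconf
    have hsz : ∀ i, |g i| ≤ (cnt i : ℤ) := fun i => by
      rw [← hgeq]; exact habs_g' i
    have hTle : (T : ℤ) ≤ (D.card : ℤ) := by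
      rw [hTsum]
      calc ∑ i, |g i| ≤ ∑ i, (cnt i : ℤ) := Finset.sum_le_sum fun i _ => hsz i
        _ = (D.card : ℤ) := by rw [← hcntsum]; push_cast; rfl
    have hTD : T ≤ D.card := by exact_mod_cast hTle
    omega
  obtain ⟨j, hj, j', hj', hne, heq⟩ :=
    Finset.exists_ne_map_eq_of_card_lt_of_maps_to hcardlt
      (f := fun j => (fun i => ∑ x ∈ S j, w x i))
      (fun j hj => Fintype.mem_piFinset.mpr fun i => Finset.mem_Icc.mpr
        (abs_le.mp (hbndZ j (le_of_lt (Finset.mem_range.mp hj)) i)))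
  rcases Ne.lt_or_gt hne with h | h
  · exact key j j' h (Finset.mem_range.mp hj') heq
  · exact key j' j h (Finset.mem_range.mp hj) heq.symm
end

section
/- Let w ∈ ℚ^d and M ∈ ℕ. Then there exists w̃ ∈ ℤ^d with ‖w̃‖_∞ ≤ 2^{O(d³)} · M^{O(d²)} such that for all x, y ∈ [−M, M]^d ∩ ℤ^d: w·x ≤ w·y if and only if w̃·x ≤ w̃·y. -/
open Matrix

lemma exists_cols {d : ℕ} {r : Type} [Fintype r] [DecidableEq r] (Mr : r → (Fin d → ℚ))
    (h : LinearIndependent ℚ Mr) :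
    ∃ κ : r → Fin d, Function.Injective κ ∧
      (Matrix.det (Matrix.of (fun i i' => Mr i (κ i'))) ≠ 0) := by
  classical
  set Mat : Matrix r (Fin d) ℚ := Matrix.of Mr with hMat
  have hrank : Mat.rank = Fintype.card r := h.rank_matrix
  have hspancols : Submodule.span ℚ (Set.range Matᵀ) = ⊤ := by
    apply Submodule.eq_top_of_finrank_eq
    erw [← Matrix.rank_eq_finrank_span_cols Mat, hrank, Module.finrank_pi]
  obtain ⟨c, hcsub, hcspan, hcind⟩ := exists_linearIndependent ℚ (Set.range Matᵀ)
  rw [hspancols] at hcspan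
  haveI : Fintype c := (Set.Finite.subset (Set.finite_range Matᵀ) hcsub).fintype
  have hbasis : Fintype.card c = Fintype.card r := by
    have hb : Nonempty (Module.Basis c ℚ (r → ℚ)) :=
      ⟨Module.Basis.mk hcind (by rw [Subtype.range_coe_subtype, Set.setOf_mem_eq, hcspan])⟩
    have := Module.finrank_eq_card_basis hb.some
    rw [Module.finrank_pi] at this
    omega
  let ec : r ≃ c := (Fintype.equivOfCardEq hbasis.symm)
  have hpick : ∀ v : c, ∃ j : Fin d, Matᵀ j = (v : r → ℚ) := fun v => hcsub v.2
  choose κ₀ hκ₀ using hpick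
  refine ⟨fun i => κ₀ (ec i), ?_, ?_⟩
  · intro i i' hee
    have : (ec i : r → ℚ) = (ec i' : r → ℚ) := by
      simp only at hee
      rw [← hκ₀ (ec i), ← hκ₀ (ec i'), hee]
    exact ec.injective (Subtype.ext this)
  · have hcols : LinearIndependent ℚ (fun i' : r => (Matrix.of (fun i i' => Mr i (κ₀ (ec i'))))ᵀ i') := by
      have : (fun i' : r => (Matrix.of (fun i i' => Mr i (κ₀ (ec i'))))ᵀ i')
          = (fun i' : r => ((ec i' : r → ℚ))) := by
        funext i' i
        have := congrFun (hκ₀ (ec i')) i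
        simpa [Mat] using this
      rw [this]
      exact hcind.comp ec ec.injective
    have := Matrix.linearIndependent_cols_iff_isUnit.mp hcols
    exact (Matrix.isUnit_iff_isUnit_det _).mp this |>.ne_zero

/-- Determinant bound over ℤ. -/
lemma det_bound {n : Type} [Fintype n] [DecidableEq n] (A : Matrix n n ℤ) (C : ℤ)
    (h : ∀ i j, |A i j| ≤ C) :
    |A.det| ≤ (Nat.factorial (Fintype.card n) : ℤ) * C ^ (Fintype.card n) := by
  have := Matrix.det_le (A := A) (abv := AbsoluteValue.abs) (x := C) h
  simpa [nsmul_eq_mul] using this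

/-- Cramer-type bounded solution lemma. -/
lemma CR (d : ℕ) {ι : Type} [Fintype ι] (R : ι → Fin d → ℤ) (e : ι → ℤ) (u₁ : Fin d → ℚ)
    (N : ℤ) (hN : 0 ≤ N) (hR : ∀ i j, |R i j| ≤ N) (he : ∀ i, |e i| ≤ 1)
    (hsol : ∀ i, ∑ j, (R i j : ℚ) * u₁ j = (e i : ℚ)) :
    ∃ (wt : Fin d → ℤ) (D : ℤ), 0 < D ∧
      (∀ j, |wt j| ≤ (Nat.factorial d : ℤ) * (N + 1) ^ d) ∧
      ∀ i, ∑ j, R i j * wt j = D * e i := by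
  classical
  set Rq : ι → (Fin d → ℚ) := fun i j => (R i j : ℚ) with hRq
  obtain ⟨t, hsub, hspan, hLI⟩ := exists_linearIndependent ℚ (Set.range Rq)
  haveI : Fintype t := (Set.Finite.subset (Set.finite_range Rq) hsub).fintype
  -- pick a row index for each element of t
  have hpick : ∀ v : t, ∃ i : ι, Rq i = (v : Fin d → ℚ) := fun v => hsub v.2
  choose pick hpickspec using hpick
  -- columns
  have hLI' : LinearIndependent ℚ (fun v : t => (v : Fin d → ℚ)) := hLI
  obtain ⟨κ, hκinj, hκdet⟩ := exists_cols (fun v : t => (v : Fin d → ℚ)) hLI'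
  -- integer square matrix
  set Qz : Matrix t t ℤ := Matrix.of (fun v v' : t => R (pick v) (κ v')) with hQz
  set ez : t → ℤ := fun v => e (pick v) with hez
  set cz : t → ℤ := Matrix.cramer Qz ez with hcz
  set Dz : ℤ := Qz.det with hDz
  have hQcast : ∀ v v' : t, ((Qz v v' : ℤ) : ℚ) = (v : Fin d → ℚ) (κ v') := by
    intro v v'
    have := congrFun (hpickspec v) (κ v')
    simpa [Qz, Rq] using this
  have hDzne : Dz ≠ 0 := by
    intro h0
    apply hκdet
    have hmap : (Matrix.of (fun i i' : t => (i : Fin d → ℚ) (κ i')))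
        = Qz.map (Int.castRingHom ℚ) := by
      ext v v'
      simp [Matrix.map, hQcast v v']
    rw [hmap, ← RingHom.mapMatrix_apply, ← RingHom.map_det]
    rw [hDz] at h0
    simp [h0]
  have hmv : Qz.mulVec cz = Dz • ez := Matrix.mulVec_cramer Qz ez
  -- candidate solution
  set wt0 : Fin d → ℤ := fun j => ∑ v' : t, if κ v' = j then cz v' else 0 with hwt0
  -- key identity for rows in t
  have hkey : ∀ v : t, ∑ j, R (pick v) j * wt0 j = Dz * ez v := by
    intro v
    have h1 : ∑ j, R (pick v) j * wt0 j = ∑ v' : t, R (pick v) (κ v') * cz v' := by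
      simp only [hwt0, Finset.mul_sum, mul_ite, mul_zero]
      rw [Finset.sum_comm]
      apply Finset.sum_congr rfl
      intro v' _
      simp
    have h2 := congrFun hmv v
    simp only [Matrix.mulVec, dotProduct, Pi.smul_apply, smul_eq_mul] at h2
    rw [h1, ← h2]
    rfl
  -- transfer to all rows via span
  have hP : ∀ ρ ∈ Submodule.span ℚ t,
      (∑ j, ρ j * (wt0 j : ℚ)) = (Dz : ℚ) * ∑ j, ρ j * u₁ j := by
    intro ρ hρ
    induction hρ using Submodule.span_induction with
    | mem v hv =>
      have hkv := hkey ⟨v, hv⟩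
      have hsv := hsol (pick ⟨v, hv⟩)
      have hvv : ∀ j, ((R (pick ⟨v, hv⟩) j : ℤ) : ℚ) = v j := fun j =>
        congrFun (hpickspec ⟨v, hv⟩) j
      have lhs : ∑ j, v j * (wt0 j : ℚ) = ((Dz * ez ⟨v, hv⟩ : ℤ) : ℚ) := by
        rw [← hkv]
        push_cast
        exact Finset.sum_congr rfl fun j _ => by rw [hvv j]
      have rhs : ∑ j, v j * u₁ j = ((ez ⟨v, hv⟩ : ℤ) : ℚ) := by
        rw [← hsv]
        exact Finset.sum_congr rfl fun j _ => by rw [hvv j]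
      rw [lhs, rhs]
      push_cast
      ring
    | zero => simp
    | add a b _ _ ha hb =>
      simp only [Pi.add_apply, add_mul, Finset.sum_add_distrib, ha, hb]
      ring
    | smul c a _ ha =>
      simp only [Pi.smul_apply, smul_eq_mul, mul_assoc, ← Finset.mul_sum, ha]
      ring
  have hall : ∀ i, ∑ j, R i j * wt0 j = Dz * (e i) := by
    intro i
    have hmem : Rq i ∈ Submodule.span ℚ t := by
      rw [hspan]
      exact Submodule.subset_span ⟨i, rfl⟩
    have := hP (Rq i) hmem
    rw [show (∑ j, Rq i j * u₁ j) = (e i : ℚ) from hsol i] at this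
    have : ((∑ j, R i j * wt0 j : ℤ) : ℚ) = ((Dz * e i : ℤ) : ℚ) := by
      push_cast
      convert this using 2
    exact_mod_cast this
  -- bound on wt0
  have hbound : ∀ j, |wt0 j| ≤ (Nat.factorial d : ℤ) * (N + 1) ^ d := by
    intro j
    have hrt : Fintype.card t ≤ d := by
      have := hLI'.fintype_card_le_finrank
      simpa [Module.finrank_fin_fun] using this
    have hEntry : ∀ v', |cz v'| ≤ (Nat.factorial d : ℤ) * (N + 1) ^ d := by
      intro v'
      have hcr : cz v' = ((Qz.updateCol v' ez).det) := by
        rw [hcz, Matrix.cramer_apply]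
      have hupd : ∀ a b, |(Qz.updateCol v' ez) a b| ≤ N + 1 := by
        intro a b
        by_cases hb : b = v'
        · subst hb
          rw [Matrix.updateCol_self]
          exact le_trans (he _) (by linarith)
        · rw [Matrix.updateCol_ne hb]
          exact le_trans (hR _ _) (by linarith)
      have := det_bound (Qz.updateCol v' ez) (N + 1) hupd
      rw [← hcr] at this
      refine le_trans this ?_
      have h1 : (Nat.factorial (Fintype.card t) : ℤ) ≤ (Nat.factorial d : ℤ) := by
        exact_mod_cast Nat.factorial_le hrt
      have h2 : (N + 1) ^ (Fintype.card t) ≤ (N + 1) ^ d :=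
        pow_le_pow_right₀ (by linarith) hrt
      have h3 : (0:ℤ) ≤ (N+1) ^ (Fintype.card t) := pow_nonneg (by linarith) _
      calc (Nat.factorial (Fintype.card t) : ℤ) * (N + 1) ^ (Fintype.card t)
          ≤ (Nat.factorial d : ℤ) * (N + 1) ^ (Fintype.card t) :=
            mul_le_mul_of_nonneg_right h1 h3
        _ ≤ (Nat.factorial d : ℤ) * (N + 1) ^ d :=
            mul_le_mul_of_nonneg_left h2 (by positivity)
    by_cases hj : ∃ v', κ v' = j
    · obtain ⟨v₀, hv₀⟩ := hj
      have : wt0 j = cz v₀ := by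
        simp only [hwt0]
        rw [Finset.sum_eq_single v₀]
        · simp [hv₀]
        · intro v' _ hne
          have : κ v' ≠ j := fun hc => hne (hκinj (by rw [hc, hv₀]))
          simp [this]
        · simp
      rw [this]; exact hEntry v₀
    · have : wt0 j = 0 := by
        rw [hwt0]
        apply Finset.sum_eq_zero
        intro v' _
        have : κ v' ≠ j := fun hc => hj ⟨v', hc⟩
        simp [this]
      rw [this]
      simp only [abs_zero]
      positivity
  -- fix sign
  rcases lt_trichotomy Dz 0 with hlt | heq | hgt
  · refine ⟨fun j => -wt0 j, -Dz, by linarith, fun j => by rw [abs_neg]; exact hbound j, ?_⟩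
    intro i
    calc ∑ j, R i j * (-wt0 j) = -∑ j, R i j * wt0 j := by simp [mul_neg]
    _ = -(Dz * e i) := by rw [hall i]
    _ = -Dz * e i := by ring
  · exact absurd heq hDzne
  · exact ⟨wt0, Dz, hgt, hbound, hall⟩

/-- Rational dot product of an integer vector with a rational vector. -/
def dQ {d : ℕ} (z : Fin d → ℤ) (u : Fin d → ℚ) : ℚ := ∑ j, (z j : ℚ) * u j

lemma dQ_add_smul {d : ℕ} (z : Fin d → ℤ) (u v : Fin d → ℚ) (c : ℚ) :
    dQ z (u + c • v) = dQ z u + c * dQ z v := by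
  simp only [dQ, Pi.add_apply, Pi.smul_apply, smul_eq_mul, mul_add, Finset.sum_add_distrib,
    Finset.mul_sum]
  congr 1
  exact Finset.sum_congr rfl fun j _ => by ring

lemma dQ_neg {d : ℕ} (z : Fin d → ℤ) (v : Fin d → ℚ) : dQ z (-v) = -dQ z v := by
  simp [dQ, Finset.sum_neg_distrib, mul_neg]

/-- The tightening loop: we can move to a feasible point whose tight set determines
membership in the feasible region. -/
lemma loop {d : ℕ} (A B : Finset (Fin d → ℤ)) :
    ∀ (n : ℕ) (u : Fin d → ℚ),
    (B.filter (fun b => dQ b u ≠ 1)).card ≤ n →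
    (∀ a ∈ A, dQ a u = 0) → (∀ b ∈ B, 1 ≤ dQ b u) →
    ∃ u', (∀ a ∈ A, dQ a u' = 0) ∧ (∀ b ∈ B, 1 ≤ dQ b u') ∧
      (∀ v : Fin d → ℚ, (∀ a ∈ A, dQ a v = 0) → (∀ b ∈ B, dQ b u' = 1 → dQ b v = 0) →
        ∀ b ∈ B, dQ b v = 0) := by
  classical
  intro n
  induction n with
  | zero =>
    intro u hcard hA hB
    refine ⟨u, hA, hB, ?_⟩
    intro v hvA hvS b hb
    apply hvS b hb
    by_contra hne
    have : b ∈ B.filter (fun b => dQ b u ≠ 1) := Finset.mem_filter.mpr ⟨hb, hne⟩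
    have := Finset.card_pos.mpr ⟨b, this⟩
    omega
  | succ n ih =>
    intro u hcard hA hB
    by_cases hΦ : ∀ v : Fin d → ℚ, (∀ a ∈ A, dQ a v = 0) → (∀ b ∈ B, dQ b u = 1 → dQ b v = 0) →
        ∀ b ∈ B, dQ b v = 0
    · exact ⟨u, hA, hB, hΦ⟩
    · push_neg at hΦ
      obtain ⟨v, hvA, hvS, b₀, hb₀B, hb₀ne⟩ := hΦ
      -- WLOG dQ b₀ v < 0
      obtain ⟨v', hv'A, hv'S, hb₀neg⟩ :
          ∃ v' : Fin d → ℚ, (∀ a ∈ A, dQ a v' = 0) ∧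
            (∀ b ∈ B, dQ b u = 1 → dQ b v' = 0) ∧ dQ b₀ v' < 0 := by
        rcases lt_or_gt_of_ne hb₀ne with hlt | hgt
        · exact ⟨v, hvA, hvS, hlt⟩
        · refine ⟨-v, fun a ha => by rw [dQ_neg, hvA a ha, neg_zero],
            fun b hb h1 => by rw [dQ_neg, hvS b hb h1, neg_zero], by rw [dQ_neg]; linarith⟩
      set T : Finset (Fin d → ℤ) := B.filter (fun b => dQ b v' < 0) with hT
      have hb₀T : b₀ ∈ T := Finset.mem_filter.mpr ⟨hb₀B, hb₀neg⟩
      obtain ⟨bs, hbsT, hbsmin⟩ := T.exists_min_image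
        (fun b => (dQ b u - 1) / (-dQ b v')) ⟨b₀, hb₀T⟩
      have hbsB : bs ∈ B := (Finset.mem_filter.mp hbsT).1
      have hbsneg : dQ bs v' < 0 := (Finset.mem_filter.mp hbsT).2
      -- key: non-tight
      have hnot1 : ∀ b ∈ T, dQ b u ≠ 1 := by
        intro b hbT h1
        have := hv'S b (Finset.mem_filter.mp hbT).1 h1
        have := (Finset.mem_filter.mp hbT).2
        linarith
      have hbs1 : 1 < dQ bs u := by
        have := hB bs hbsB
        have := hnot1 bs hbsT
        rcases this.lt_or_gt with h | h
        · linarith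
        · exact h
      set ts : ℚ := (dQ bs u - 1) / (-dQ bs v') with hts
      have hts0 : 0 < ts := div_pos (by linarith) (by linarith)
      set u' : Fin d → ℚ := u + ts • v' with hu'
      have hA' : ∀ a ∈ A, dQ a u' = 0 := by
        intro a ha
        rw [hu', dQ_add_smul, hA a ha, hv'A a ha]
        ring
      have hB' : ∀ b ∈ B, 1 ≤ dQ b u' := by
        intro b hb
        rw [hu', dQ_add_smul]
        by_cases hneg : dQ b v' < 0
        · have hbT : b ∈ T := Finset.mem_filter.mpr ⟨hb, hneg⟩
          have hmin := hbsmin b hbT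
          have h1 : ts ≤ (dQ b u - 1) / (-dQ b v') := hmin
          have h2 : ts * (-dQ b v') ≤ dQ b u - 1 :=
            (le_div_iff₀ (show (0:ℚ) < -dQ b v' by linarith)).mp h1
          nlinarith
        · push_neg at hneg
          have := hB b hb
          nlinarith
      have htight : dQ bs u' = 1 := by
        rw [hu', dQ_add_smul, hts]
        have hne : dQ bs v' ≠ 0 := by linarith
        have key : ∀ x y : ℚ, y ≠ 0 → x / -y * y = -x := by
          intro x y hy
          field_simp
        rw [key _ _ hne]
        ring
      have hsubset : B.filter (fun b => dQ b u' ≠ 1) ⊆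
          (B.filter (fun b => dQ b u ≠ 1)).erase bs := by
        intro b hbmem
        obtain ⟨hbB, hbne⟩ := Finset.mem_filter.mp hbmem
        refine Finset.mem_erase.mpr ⟨?_, Finset.mem_filter.mpr ⟨hbB, ?_⟩⟩
        · intro hEq; subst hEq; exact hbne htight
        · intro h1
          apply hbne
          rw [hu', dQ_add_smul, h1, hv'S b hbB h1]
          ring
      have hcard' : (B.filter (fun b => dQ b u' ≠ 1)).card ≤ n := by
        have h1 := Finset.card_le_card hsubset
        have hbsmem : bs ∈ B.filter (fun b => dQ b u ≠ 1) :=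
          Finset.mem_filter.mpr ⟨hbsB, hnot1 bs hbsT⟩
        have h2 := Finset.card_erase_of_mem hbsmem
        omega
      exact ih u' hcard' hA' hB'

/-- Frank–Tardos: there is an absolute constant `c` such that every `w ∈ ℚ^d` admits an
integer vector `w̃` with `‖w̃‖∞ ≤ 2^{c d³} (M+1)^{c d²}` inducing the same comparisons
as `w` on all integer points of `[-M, M]^d`. -/
theorem stmt15 : ∃ c : ℕ, ∀ (d : ℕ) (w : Fin d → ℚ) (M : ℕ),
    ∃ wt : Fin d → ℤ,
      (∀ i, |wt i| ≤ 2 ^ (c * d ^ 3) * ((M : ℤ) + 1) ^ (c * d ^ 2)) ∧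
      ∀ x y : Fin d → ℤ, (∀ i, |x i| ≤ (M : ℤ)) → (∀ i, |y i| ≤ (M : ℤ)) →
        ((∑ i, w i * (x i : ℚ)) ≤ (∑ i, w i * (y i : ℚ)) ↔
         (∑ i, wt i * x i) ≤ (∑ i, wt i * y i)) := by
  classical
  refine ⟨3, ?_⟩
  intro d w M
  set K : ℤ := 2 * M with hK
  set Z : Finset (Fin d → ℤ) := Fintype.piFinset (fun _ => Finset.Icc (-K) K) with hZ
  have hZmem : ∀ z : Fin d → ℤ, z ∈ Z ↔ ∀ j, |z j| ≤ K := by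
    intro z
    rw [hZ, Fintype.mem_piFinset]
    refine forall_congr' fun j => ?_
    rw [Finset.mem_Icc, abs_le]
  set A : Finset (Fin d → ℤ) := Z.filter (fun z => dQ z w = 0) with hA
  set B : Finset (Fin d → ℤ) := Z.filter (fun z => 0 < dQ z w) with hB
  -- scale w to make all strict dot products ≥ 1
  set m0 : ℚ := if h : B.Nonempty then (B.image (fun b => dQ b w)).min' (h.image _) else 1
    with hm0
  have hm0pos : 0 < m0 := by
    rw [hm0]
    split_ifs with h
    · obtain ⟨b, hb, hbeq⟩ := Finset.mem_image.mp ((B.image (fun b => dQ b w)).min'_mem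
        (h.image _))
      rw [← hbeq]
      exact (Finset.mem_filter.mp hb).2
    · norm_num
  have hm0le : ∀ b ∈ B, m0 ≤ dQ b w := by
    intro b hb
    rw [hm0]
    rw [dif_pos ⟨b, hb⟩]
    exact Finset.min'_le _ _ (Finset.mem_image_of_mem _ hb)
  set u₀ : Fin d → ℚ := 0 + m0⁻¹ • w with hu₀
  have hu₀A : ∀ a ∈ A, dQ a u₀ = 0 := by
    intro a ha
    rw [hu₀, dQ_add_smul, (Finset.mem_filter.mp ha).2]
    simp [dQ]
  have hu₀B : ∀ b ∈ B, 1 ≤ dQ b u₀ := by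
    intro b hb
    rw [hu₀, dQ_add_smul]
    have h1 : dQ b (0 : Fin d → ℚ) = 0 := by simp [dQ]
    rw [h1, zero_add, inv_mul_eq_div, le_div_iff₀ hm0pos, one_mul]
    exact hm0le b hb
  obtain ⟨u₁, hu₁A, hu₁B, hΦ⟩ := loop A B (B.filter (fun b => dQ b u₀ ≠ 1)).card u₀
    le_rfl hu₀A hu₀B
  -- tight set and the linear system
  set S : Finset (Fin d → ℤ) := B.filter (fun b => dQ b u₁ = 1) with hS
  set AS : Finset (Fin d → ℤ) := A ∪ S with hAS
  have hdisj : ∀ z ∈ S, z ∉ A := by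
    intro z hzS hzA
    have h1 := (Finset.mem_filter.mp hzA).2
    have h2 := (Finset.mem_filter.mp ((Finset.mem_filter.mp hzS).1)).2
    linarith
  set Rf : {z // z ∈ AS} → Fin d → ℤ := fun z => (z : Fin d → ℤ) with hRf
  set ef : {z // z ∈ AS} → ℤ := fun z => if (z : Fin d → ℤ) ∈ A then 0 else 1 with hef
  have hsolv : ∀ i : {z // z ∈ AS}, ∑ j, (Rf i j : ℚ) * u₁ j = (ef i : ℚ) := by
    rintro ⟨z, hz⟩
    show ∑ j, ((z j : ℤ) : ℚ) * u₁ j = ((if z ∈ A then 0 else 1 : ℤ) : ℚ)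
    have hgoal : ∑ j, ((z j : ℤ) : ℚ) * u₁ j = dQ z u₁ := rfl
    rw [hgoal]
    by_cases hzA : z ∈ A
    · rw [if_pos hzA, hu₁A z hzA]; norm_num
    · have hzS : z ∈ S := by
        rcases Finset.mem_union.mp hz with h | h
        · exact absurd h hzA
        · exact h
      rw [if_neg hzA, (Finset.mem_filter.mp hzS).2]; norm_num
  have hRbd : ∀ (i : {z // z ∈ AS}) (j : Fin d), |Rf i j| ≤ K := by
    rintro ⟨z, hz⟩ j
    have hzZ : z ∈ Z := by
      rcases Finset.mem_union.mp hz with h | h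
      · exact (Finset.mem_filter.mp h).1
      · exact (Finset.mem_filter.mp ((Finset.mem_filter.mp h).1)).1
    exact (hZmem z).mp hzZ j
  have hebd : ∀ i : {z // z ∈ AS}, |ef i| ≤ 1 := by
    intro i
    simp only [hef]
    split_ifs <;> norm_num
  obtain ⟨wt, D, hD, hwtbd, hwteq⟩ := CR d Rf ef u₁ K (by positivity) hRbd hebd hsolv
  -- key sign properties of wt
  have hwtA : ∀ a ∈ A, ∑ j, a j * wt j = 0 := by
    intro a ha
    have := hwteq ⟨a, Finset.mem_union_left _ ha⟩
    simpa [hRf, hef, ha] using this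
  have hwtS : ∀ b ∈ S, ∑ j, b j * wt j = D := by
    intro b hb
    have := hwteq ⟨b, Finset.mem_union_right _ hb⟩
    simpa [hRf, hef, hdisj b hb] using this
  -- terminal property gives positivity on all of B
  have hwtB : ∀ b ∈ B, 0 < ∑ j, b j * wt j := by
    have hDQ : ((D : ℚ)) ≠ 0 := Int.cast_ne_zero.mpr hD.ne'
    set wtQ : Fin d → ℚ := fun j => (wt j : ℚ) with hwtQ
    set v : Fin d → ℚ := (-u₁) + (D : ℚ)⁻¹ • wtQ with hv
    have hdot : ∀ z : Fin d → ℤ, dQ z wtQ = ((∑ j, z j * wt j : ℤ) : ℚ) := by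
      intro z
      rw [dQ]
      push_cast
      rfl
    have hvA : ∀ a ∈ A, dQ a v = 0 := by
      intro a ha
      rw [hv, dQ_add_smul, dQ_neg, hu₁A a ha, hdot, hwtA a ha]
      simp
    have hvS : ∀ b ∈ B, dQ b u₁ = 1 → dQ b v = 0 := by
      intro b hb h1
      have hbS : b ∈ S := Finset.mem_filter.mpr ⟨hb, h1⟩
      rw [hv, dQ_add_smul, dQ_neg, h1, hdot, hwtS b hbS]
      field_simp
      norm_num
    have hall := hΦ v hvA hvS
    intro b hb
    have h0 := hall b hb
    rw [hv, dQ_add_smul, dQ_neg, hdot] at h0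
    have h1 : ((∑ j, b j * wt j : ℤ) : ℚ) = (D : ℚ) * dQ b u₁ := by
      field_simp at h0
      push_cast at h0 ⊢
      linarith [h0]
    have h2 : (1 : ℚ) ≤ dQ b u₁ := hu₁B b hb
    have h3 : (0 : ℚ) < (D : ℚ) := by exact_mod_cast hD
    have : (0 : ℚ) < ((∑ j, b j * wt j : ℤ) : ℚ) := by
      rw [h1]
      nlinarith
    exact_mod_cast this
  -- the sign lemma on the difference box
  have hsign : ∀ z : Fin d → ℤ, (∀ j, |z j| ≤ K) →
      (0 ≤ dQ z w ↔ 0 ≤ ∑ j, z j * wt j) := by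
    intro z hzbd
    have hzZ : z ∈ Z := (hZmem z).mpr hzbd
    rcases lt_trichotomy (dQ z w) 0 with hlt | heq | hgt
    · have hnz : (fun j => -z j) ∈ Z := (hZmem _).mpr (by intro j; rw [abs_neg]; exact hzbd j)
      have hnB : (fun j => -z j) ∈ B := by
        refine Finset.mem_filter.mpr ⟨hnz, ?_⟩
        have : dQ (fun j => -z j) w = -dQ z w := by
          simp [dQ, Finset.sum_neg_distrib, neg_mul]
        rw [this]
        linarith
      have := hwtB _ hnB
      have hflip : ∑ j, (fun j => -z j) j * wt j = -∑ j, z j * wt j := by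
        simp [neg_mul, Finset.sum_neg_distrib]
      rw [hflip] at this
      constructor
      · intro h; linarith
      · intro h; linarith [this]
    · have hzA : z ∈ A := Finset.mem_filter.mpr ⟨hzZ, heq⟩
      rw [heq, hwtA z hzA]
      simp
    · have hzB : z ∈ B := Finset.mem_filter.mpr ⟨hzZ, hgt⟩
      have := hwtB z hzB
      constructor
      · intro _; exact le_of_lt (by exact_mod_cast this)
      · intro _; linarith
  refine ⟨wt, ?_, ?_⟩
  · -- the bound
    intro i
    have h1 := hwtbd i
    have hnat : (Nat.factorial d) * (2 * M + 1) ^ d ≤ 2 ^ (3 * d ^ 3) * (M + 1) ^ (3 * d ^ 2) := by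
      have f1 : Nat.factorial d ≤ d ^ d := Nat.factorial_le_pow d
      have f2 : d ^ d ≤ 2 ^ (d * d) := by
        rw [pow_mul]
        exact Nat.pow_le_pow_left (Nat.le_of_lt (Nat.lt_two_pow_self)) d
      have f3 : (2 * M + 1) ^ d ≤ 2 ^ d * (M + 1) ^ d := by
        rw [← mul_pow]
        exact Nat.pow_le_pow_left (by omega) d
      calc Nat.factorial d * (2 * M + 1) ^ d
          ≤ 2 ^ (d * d) * (2 ^ d * (M + 1) ^ d) :=
            Nat.mul_le_mul (f1.trans f2) f3
        _ = 2 ^ (d * d + d) * (M + 1) ^ d := by ring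
        _ ≤ 2 ^ (3 * d ^ 3) * (M + 1) ^ (3 * d ^ 2) := by
            have hdd : d * d + d ≤ 3 * d ^ 3 := by
              rcases Nat.eq_zero_or_pos d with h0 | h0
              · subst h0; simp
              · nlinarith
            have hdd2 : d ≤ 3 * d ^ 2 := by
              rcases Nat.eq_zero_or_pos d with h0 | h0
              · subst h0; simp
              · nlinarith
            exact Nat.mul_le_mul (Nat.pow_le_pow_right (by norm_num) hdd)
              (Nat.pow_le_pow_right (by omega) hdd2)
    have h2 : ((Nat.factorial d : ℤ)) * (K + 1) ^ d
        = ((Nat.factorial d * (2 * M + 1) ^ d : ℕ) : ℤ) := by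
      push_cast [hK]
      ring
    calc |wt i| ≤ (Nat.factorial d : ℤ) * (K + 1) ^ d := h1
      _ = ((Nat.factorial d * (2 * M + 1) ^ d : ℕ) : ℤ) := h2
      _ ≤ ((2 ^ (3 * d ^ 3) * (M + 1) ^ (3 * d ^ 2) : ℕ) : ℤ) := by exact_mod_cast hnat
      _ = 2 ^ (3 * d ^ 3) * ((M : ℤ) + 1) ^ (3 * d ^ 2) := by push_cast; ring
  · -- the comparison equivalence
    intro x y hx hy
    set z : Fin d → ℤ := fun j => y j - x j with hz
    have hzbd : ∀ j, |z j| ≤ K := by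
      intro j
      rw [hz, hK]
      calc |y j - x j| ≤ |y j| + |x j| := abs_sub _ _
        _ ≤ M + M := add_le_add (hy j) (hx j)
        _ = 2 * M := by ring
    have hkey := hsign z hzbd
    have e1 : (∑ i, w i * (x i : ℚ)) ≤ (∑ i, w i * (y i : ℚ)) ↔ 0 ≤ dQ z w := by
      rw [dQ]
      constructor
      · intro h
        have : ∑ j, (z j : ℚ) * w j = ∑ i, w i * (y i : ℚ) - ∑ i, w i * (x i : ℚ) := by
          rw [← Finset.sum_sub_distrib]
          refine Finset.sum_congr rfl fun j _ => ?_
          rw [hz]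
          push_cast
          ring
        rw [this]
        linarith
      · intro h
        have : ∑ j, (z j : ℚ) * w j = ∑ i, w i * (y i : ℚ) - ∑ i, w i * (x i : ℚ) := by
          rw [← Finset.sum_sub_distrib]
          refine Finset.sum_congr rfl fun j _ => ?_
          rw [hz]
          push_cast
          ring
        rw [this] at h
        linarith
    have e2 : (∑ i, wt i * x i) ≤ (∑ i, wt i * y i) ↔ 0 ≤ ∑ j, z j * wt j := by
      have : ∑ j, z j * wt j = ∑ i, wt i * y i - ∑ i, wt i * x i := by
        rw [← Finset.sum_sub_distrib]
        refine Finset.sum_congr rfl fun j _ => ?_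
        rw [hz]
        ring
      rw [this]
      constructor
      · intro h; linarith
      · intro h; linarith
    rw [e1, e2]
    exact hkey
end
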